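/- arXiv:1106.1666 — 6 statements merged into one kernel-verified Lean document; each statement's English description precedes it below -/
import Mathlib

section
/- Let f be a form of degree 2d with f_{2d,i} > 0 for i = 1,...,n. If Σ_{α∈Δ} |f_α|·(α^α)^{1/2d} / (2d·Π_{i=1}^n f_{2d,i}^{α_i/2d}) ≤ 1, then f is a sum of squares. -/
open Finset

variable {R : Type*} [CommRing R]

/-- Telescoping identity underlying the two-variable AM–GM SOS decomposition. -/
lemma tv_identity (e : ℕ) (x y : R) :
    (e : R) * x ^ (2*e+2) + y ^ (2*e+2) =
      ((e : R) + 1) * (x ^ (2*e) * y ^ 2) +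
        ∑ k ∈ range e, ((k : R) + 1) * (x ^ (2*k) * y ^ (2*(e-1-k)) * (x^2 - y^2)^2) := by
  induction e with
  | zero => simp
  | succ e ih =>
    rw [Finset.sum_range_succ]
    have hsum : ∑ k ∈ range e, ((k : R) + 1) * (x ^ (2*k) * y ^ (2*(e+1-1-k)) * (x^2 - y^2)^2)
        = (∑ k ∈ range e, ((k : R) + 1) * (x ^ (2*k) * y ^ (2*(e-1-k)) * (x^2 - y^2)^2)) * y^2 := by
      rw [Finset.sum_mul]
      refine Finset.sum_congr rfl fun k hk => ?_
      have hk' : k < e := Finset.mem_range.1 hk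
      rw [show 2*(e+1-1-k) = 2*(e-1-k) + 2 by omega, pow_add]
      ring
    rw [hsum]
    have key : (∑ k ∈ range e, ((k : R) + 1) * (x ^ (2*k) * y ^ (2*(e-1-k)) * (x^2 - y^2)^2))
        = (e : R) * x ^ (2*e+2) + y ^ (2*e+2) - ((e : R) + 1) * (x ^ (2*e) * y ^ 2) := by
      rw [ih]; ring
    rw [key]
    rw [show 2*(e+1)+2 = (2*e) + 4 by omega, show 2*(e+1) = (2*e)+2 by omega,
        show 2*e+2 = (2*e)+2 by omega]
    rw [show e+1-1-e = 0 by omega]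
    push_cast
    rw [pow_add, pow_add, pow_add, pow_add]
    ring

lemma sos_sq (a : R) : IsSumSq (a ^ 2) := by
  rw [pow_two, ← add_zero (a*a)]; exact IsSumSq.sq_add a IsSumSq.zero

lemma sos_sum {ι : Type*} (s : Finset ι) (g : ι → R) (h : ∀ i ∈ s, IsSumSq (g i)) :
    IsSumSq (∑ i ∈ s, g i) := by
  induction s using Finset.cons_induction with
  | empty => simpa using IsSumSq.zero
  | cons i s his ih =>
    rw [Finset.sum_cons]
    exact (h i (Finset.mem_cons_self i s)).add (ih fun j hj => h j (Finset.mem_cons.2 (Or.inr hj)))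

lemma sos_sq_mul (a : R) {p : R} (h : IsSumSq p) : IsSumSq (a ^ 2 * p) := by
  induction h with
  | zero => simpa using IsSumSq.zero
  | @sq_add b S pS ih =>
    have : a ^ 2 * (b * b + S) = (a*b) * (a*b) + a ^ 2 * S := by ring
    rw [this]; exact IsSumSq.sq_add _ ih

lemma sos_map {S : Type*} [CommRing S] (φ : R →+* S) {p : R} (h : IsSumSq p) :
    IsSumSq (φ p) := by
  induction h with
  | zero => simpa using IsSumSq.zero
  | @sq_add a q pq ih => rw [map_add, map_mul]; exact IsSumSq.sq_add _ ih

open MvPolynomial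

section Poly

variable {σ : Type*}

lemma sos_C_mul {c : ℝ} (hc : 0 ≤ c) {p : MvPolynomial σ ℝ} (h : IsSumSq p) :
    IsSumSq (C c * p) := by
  have hC : (C c : MvPolynomial σ ℝ) = (C (Real.sqrt c))^2 := by
    rw [← map_pow]; congr 1; rw [sq, Real.mul_self_sqrt hc]
  rw [hC]; exact sos_sq_mul _ h

lemma tv_sos (e : ℕ) (x y : MvPolynomial σ ℝ) :
    IsSumSq (C ((e:ℝ)/((e:ℝ)+1)) * x ^ (2*e+2) + C (1/((e:ℝ)+1)) * y ^ (2*e+2)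
      - x ^ (2*e) * y ^ 2) := by
  have he : ((e:ℝ)+1) ≠ 0 := by positivity
  have c1 : (C ((e:ℝ)/((e:ℝ)+1)) : MvPolynomial σ ℝ) = C (1/((e:ℝ)+1)) * (e : MvPolynomial σ ℝ) := by
    rw [← map_natCast (C : ℝ →+* MvPolynomial σ ℝ), ← map_mul]
    congr 1; field_simp
  have c2 : (1 : MvPolynomial σ ℝ) = C (1/((e:ℝ)+1)) * ((e : MvPolynomial σ ℝ)+1) := by
    have h3 : ((e : MvPolynomial σ ℝ)+1) = C ((e:ℝ)+1) := by
      rw [← map_natCast (C : ℝ →+* MvPolynomial σ ℝ)]; simp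
    rw [h3, ← map_mul]
    rw [show (1/((e:ℝ)+1)) * ((e:ℝ)+1) = 1 by field_simp]; simp
  have hSS : (∑ k ∈ Finset.range e, ((k : MvPolynomial σ ℝ) + 1) *
        (x ^ (2*k) * y ^ (2*(e-1-k)) * (x^2 - y^2)^2))
      = (e : MvPolynomial σ ℝ) * x ^ (2*e+2) + y ^ (2*e+2)
        - ((e : MvPolynomial σ ℝ)+1) * (x ^ (2*e) * y ^ 2) := by
    linear_combination - tv_identity e x y
  have key : C ((e:ℝ)/((e:ℝ)+1)) * x ^ (2*e+2) + C (1/((e:ℝ)+1)) * y ^ (2*e+2)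
      - x ^ (2*e) * y ^ 2
      = C (1/((e:ℝ)+1)) * (∑ k ∈ Finset.range e, ((k : MvPolynomial σ ℝ) + 1) *
          (x ^ (2*k) * y ^ (2*(e-1-k)) * (x^2 - y^2)^2)) := by
    rw [hSS]
    linear_combination (x ^ (2*e+2)) * c1 - (x ^ (2*e) * y ^ 2) * c2
  rw [key]
  refine sos_C_mul (by positivity) (sos_sum _ _ fun k hk => ?_)
  have hc : ((k : MvPolynomial σ ℝ) + 1) = C ((k:ℝ)+1) := by
    rw [← map_natCast (C : ℝ →+* MvPolynomial σ ℝ)]; simp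
  rw [hc]
  refine sos_C_mul (by positivity) ?_
  have hterm : x ^ (2*k) * y ^ (2*(e-1-k)) * (x^2 - y^2)^2
      = (x^k)^2 * ((y^(e-1-k))^2 * ((x^2-y^2))^2) := by
    rw [← pow_mul, ← pow_mul]; ring
  rw [hterm]
  exact sos_sq_mul _ (sos_sq_mul _ (sos_sq _))

end Poly

section EvenAGM

variable {n : ℕ}

/-- Multivariate even AM–GM is a sum of squares:
`∑ (b i / d) X i ^ (2d) - ∏ X i ^ (2 b i)` for `∑ b = d ≥ 1`. -/
lemma E_sos : ∀ d : ℕ, 1 ≤ d → ∀ (b : Fin n → ℕ), (∑ i, b i) = d →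
    IsSumSq ((∑ i, C ((b i : ℝ)/(d : ℝ)) * (X i : MvPolynomial (Fin n) ℝ) ^ (2*d))
      - ∏ i, (X i : MvPolynomial (Fin n) ℝ) ^ (2 * b i)) := by
  refine Nat.le_induction ?_ ?_
  · -- base case d = 1
    intro b hb
    obtain ⟨j, hj⟩ : ∃ j, b j ≠ 0 := by
      by_contra h
      push_neg at h
      simp [h] at hb
    have herase : b j + ∑ i ∈ Finset.univ.erase j, b i = 1 := by
      rw [Finset.add_sum_erase _ b (Finset.mem_univ j)]; exact hb
    have hbj : b j = 1 := by
      have : 0 ≤ ∑ i ∈ Finset.univ.erase j, b i := Nat.zero_le _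
      omega
    have hz : ∀ i, i ≠ j → b i = 0 := by
      intro i hi
      have h0 : ∑ i ∈ Finset.univ.erase j, b i = 0 := by omega
      exact Finset.sum_eq_zero_iff.1 h0 i (Finset.mem_erase.2 ⟨hi, Finset.mem_univ i⟩)
    rw [Finset.sum_eq_single j (fun i _ hi => by simp [hz i hi])
        (fun h => absurd (Finset.mem_univ j) h),
      Finset.prod_eq_single j (fun i _ hi => by simp [hz i hi])
        (fun h => absurd (Finset.mem_univ j) h), hbj]
    norm_num
  · -- inductive step
    intro d hd IH b hb
    obtain ⟨j, hj⟩ : ∃ j, b j ≠ 0 := by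
      by_contra h
      push_neg at h
      rw [Finset.sum_eq_zero (fun i _ => h i)] at hb
      omega
    have hd0 : (d:ℝ) ≠ 0 := Nat.cast_ne_zero.2 (by omega)
    have hd1 : ((d:ℝ)+1) ≠ 0 := by positivity
    set δ : Fin n → ℕ := Function.update b j (b j - 1) with hδdef
    have hδj : δ j = b j - 1 := Function.update_self j _ b
    have hδi : ∀ i, i ≠ j → δ i = b i := fun i hi => Function.update_of_ne hi _ b
    have hδsum : ∑ i, δ i = d := by
      have h1 : b j + ∑ i ∈ Finset.univ.erase j, b i = d + 1 := by
        rw [Finset.add_sum_erase _ b (Finset.mem_univ j)]; exact hb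
      have h2 : δ j + ∑ i ∈ Finset.univ.erase j, δ i = ∑ i, δ i := by
        rw [Finset.add_sum_erase _ δ (Finset.mem_univ j)]
      have h3 : ∑ i ∈ Finset.univ.erase j, δ i = ∑ i ∈ Finset.univ.erase j, b i :=
        Finset.sum_congr rfl fun i hi => hδi i (Finset.mem_erase.1 hi).1
      omega
    -- the three building blocks
    have hprod : (∏ i, (X i : MvPolynomial (Fin n) ℝ)^(2*b i))
        = (X j : MvPolynomial (Fin n) ℝ)^2 * ∏ i, (X i : MvPolynomial (Fin n) ℝ)^(2*δ i) := by
      rw [← Finset.mul_prod_erase Finset.univ _ (Finset.mem_univ j),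
        ← Finset.mul_prod_erase Finset.univ
          (fun i => (X i : MvPolynomial (Fin n) ℝ)^(2*δ i)) (Finset.mem_univ j)]
      have h3 : ∏ i ∈ Finset.univ.erase j, (X i : MvPolynomial (Fin n) ℝ)^(2*b i)
          = ∏ i ∈ Finset.univ.erase j, (X i : MvPolynomial (Fin n) ℝ)^(2*δ i) :=
        Finset.prod_congr rfl fun i hi => by rw [hδi i (Finset.mem_erase.1 hi).1]
      rw [h3, hδj, show 2*b j = 2 + 2*(b j - 1) by omega, pow_add]
      ring
    have hsplit : (∑ i, C ((b i : ℝ)/((d:ℝ)+1)) * (X i : MvPolynomial (Fin n) ℝ) ^ (2*d+2))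
        = (∑ i, C ((δ i : ℝ)/((d:ℝ)+1)) * (X i : MvPolynomial (Fin n) ℝ) ^ (2*d+2))
          + C (1/((d:ℝ)+1)) * (X j : MvPolynomial (Fin n) ℝ) ^ (2*d+2) := by
      rw [← Finset.add_sum_erase _ _ (Finset.mem_univ j),
        ← Finset.add_sum_erase _
          (fun i => C ((δ i : ℝ)/((d:ℝ)+1)) * (X i : MvPolynomial (Fin n) ℝ) ^ (2*d+2))
          (Finset.mem_univ j)]
      have h3 : ∑ i ∈ Finset.univ.erase j,
            C ((b i : ℝ)/((d:ℝ)+1)) * (X i : MvPolynomial (Fin n) ℝ) ^ (2*d+2)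
          = ∑ i ∈ Finset.univ.erase j,
            C ((δ i : ℝ)/((d:ℝ)+1)) * (X i : MvPolynomial (Fin n) ℝ) ^ (2*d+2) :=
        Finset.sum_congr rfl fun i hi => by rw [hδi i (Finset.mem_erase.1 hi).1]
      rw [h3]
      have hcast : (b j : ℝ) = (δ j : ℝ) + 1 := by
        rw [hδj, Nat.cast_sub (by omega)]; push_cast; ring
      have h4 : (C ((b j : ℝ)/((d:ℝ)+1)) : MvPolynomial (Fin n) ℝ)
          = C ((δ j : ℝ)/((d:ℝ)+1)) + C (1/((d:ℝ)+1)) := by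
        rw [← map_add]; congr 1; rw [hcast]; field_simp
      rw [h4]; ring
    have h3 : (X j : MvPolynomial (Fin n) ℝ)^2
          * ∑ i, C ((δ i : ℝ)/(d:ℝ)) * (X i : MvPolynomial (Fin n) ℝ) ^ (2*d)
        = ∑ i, C ((δ i : ℝ)/(d:ℝ))
            * ((X i : MvPolynomial (Fin n) ℝ) ^ (2*d) * (X j : MvPolynomial (Fin n) ℝ)^2) := by
      rw [Finset.mul_sum]
      exact Finset.sum_congr rfl fun i _ => by ring
    have hone : (∑ i, (C ((δ i : ℝ)/(d:ℝ)) : MvPolynomial (Fin n) ℝ)) = 1 := by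
      rw [← map_sum, ← Finset.sum_div]
      have : (∑ i, (δ i : ℝ)) = (d : ℝ) := by
        rw [← Nat.cast_sum, hδsum]
      rw [this, div_self hd0, map_one]
    have hT : (∑ i, C ((δ i : ℝ)/(d:ℝ)) *
          (C ((d:ℝ)/((d:ℝ)+1)) * (X i : MvPolynomial (Fin n) ℝ) ^ (2*d+2)
            + C (1/((d:ℝ)+1)) * (X j : MvPolynomial (Fin n) ℝ) ^ (2*d+2)
            - (X i : MvPolynomial (Fin n) ℝ) ^ (2*d) * (X j : MvPolynomial (Fin n) ℝ)^2))
        = (∑ i, C ((δ i : ℝ)/((d:ℝ)+1)) * (X i : MvPolynomial (Fin n) ℝ) ^ (2*d+2))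
          + C (1/((d:ℝ)+1)) * (X j : MvPolynomial (Fin n) ℝ) ^ (2*d+2)
          - ∑ i, C ((δ i : ℝ)/(d:ℝ))
              * ((X i : MvPolynomial (Fin n) ℝ) ^ (2*d) * (X j : MvPolynomial (Fin n) ℝ)^2) := by
      have hterm : ∀ i ∈ Finset.univ, C ((δ i : ℝ)/(d:ℝ)) *
            (C ((d:ℝ)/((d:ℝ)+1)) * (X i : MvPolynomial (Fin n) ℝ) ^ (2*d+2)
              + C (1/((d:ℝ)+1)) * (X j : MvPolynomial (Fin n) ℝ) ^ (2*d+2)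
              - (X i : MvPolynomial (Fin n) ℝ) ^ (2*d) * (X j : MvPolynomial (Fin n) ℝ)^2)
          = C ((δ i : ℝ)/((d:ℝ)+1)) * (X i : MvPolynomial (Fin n) ℝ) ^ (2*d+2)
            + C ((δ i : ℝ)/(d:ℝ)) * (C (1/((d:ℝ)+1)) * (X j : MvPolynomial (Fin n) ℝ) ^ (2*d+2))
            - C ((δ i : ℝ)/(d:ℝ))
              * ((X i : MvPolynomial (Fin n) ℝ) ^ (2*d) * (X j : MvPolynomial (Fin n) ℝ)^2) := by
        intro i _
        have hc : (C ((δ i : ℝ)/(d:ℝ)) * C ((d:ℝ)/((d:ℝ)+1)) : MvPolynomial (Fin n) ℝ)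
            = C ((δ i : ℝ)/((d:ℝ)+1)) := by
          rw [← map_mul]; congr 1; field_simp
        rw [← hc]; ring
      rw [Finset.sum_congr rfl hterm, Finset.sum_sub_distrib, Finset.sum_add_distrib,
        ← Finset.sum_mul, hone, one_mul]
    -- assemble
    have hEδ := IH δ hδsum
    have hTV : IsSumSq (∑ i, C ((δ i : ℝ)/(d:ℝ)) *
          (C ((d:ℝ)/((d:ℝ)+1)) * (X i : MvPolynomial (Fin n) ℝ) ^ (2*d+2)
            + C (1/((d:ℝ)+1)) * (X j : MvPolynomial (Fin n) ℝ) ^ (2*d+2)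
            - (X i : MvPolynomial (Fin n) ℝ) ^ (2*d) * (X j : MvPolynomial (Fin n) ℝ)^2)) := by
      refine sos_sum _ _ fun i _ => sos_C_mul (by positivity) ?_
      exact tv_sos d (X i) (X j)
    have hsos := (sos_sq_mul (X j) hEδ).add hTV
    have hfin : (∑ i, C ((b i : ℝ)/(((d+1):ℕ):ℝ)) * (X i : MvPolynomial (Fin n) ℝ) ^ (2*(d+1)))
        - ∏ i, (X i : MvPolynomial (Fin n) ℝ) ^ (2 * b i)
        = (X j : MvPolynomial (Fin n) ℝ)^2
            * ((∑ i, C ((δ i : ℝ)/(d:ℝ)) * (X i : MvPolynomial (Fin n) ℝ) ^ (2*d))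
              - ∏ i, (X i : MvPolynomial (Fin n) ℝ) ^ (2 * δ i))
          + ∑ i, C ((δ i : ℝ)/(d:ℝ)) *
              (C ((d:ℝ)/((d:ℝ)+1)) * (X i : MvPolynomial (Fin n) ℝ) ^ (2*d+2)
                + C (1/((d:ℝ)+1)) * (X j : MvPolynomial (Fin n) ℝ) ^ (2*d+2)
                - (X i : MvPolynomial (Fin n) ℝ) ^ (2*d) * (X j : MvPolynomial (Fin n) ℝ)^2) := by
      push_cast
      rw [show 2*(d+1) = 2*d+2 by omega]
      rw [mul_sub, h3]
      linear_combination hsplit - hprod - hT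
    rw [hfin]
    exact hsos

lemma exists_le_sum (a : Fin n → ℕ) : ∀ m, m ≤ ∑ i, a i →
    ∃ b : Fin n → ℕ, (∀ i, b i ≤ a i) ∧ ∑ i, b i = m := by
  intro m
  induction m with
  | zero => exact fun _ => ⟨0, fun i => Nat.zero_le _, by simp⟩
  | succ m ih =>
    intro h
    obtain ⟨b, hb, hs⟩ := ih (by omega)
    obtain ⟨i, hi⟩ : ∃ i, b i < a i := by
      by_contra hc
      push_neg at hc
      have h1 : ∑ i, a i ≤ ∑ i, b i := Finset.sum_le_sum fun i _ => hc i
      omega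
    refine ⟨Function.update b i (b i + 1), fun k => ?_, ?_⟩
    · by_cases hk : k = i
      · subst hk; rw [Function.update_self]; omega
      · rw [Function.update_of_ne hk]; exact hb k
    · rw [Finset.sum_update_of_mem (Finset.mem_univ i), Finset.sdiff_singleton_eq_erase]
      have h2 : b i + ∑ k ∈ Finset.univ.erase i, b k = ∑ k, b k :=
        Finset.add_sum_erase _ b (Finset.mem_univ i)
      omega

lemma G_sos (d : ℕ) (hd : 1 ≤ d) (a : Fin n → ℕ) (ha : ∑ i, a i = 2*d) :
    IsSumSq ((∑ i, C ((a i : ℝ)/(2*(d:ℝ))) * (X i : MvPolynomial (Fin n) ℝ) ^ (2*d))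
      - ∏ i, (X i : MvPolynomial (Fin n) ℝ) ^ (a i)) := by
  obtain ⟨b, hba, hbs⟩ := exists_le_sum a d (by omega)
  set c : Fin n → ℕ := fun i => a i - b i with hcdef
  have hbc : ∀ i, b i + c i = a i := fun i => by
    have := hba i; simp only [hcdef]; omega
  have hcs : ∑ i, c i = d := by
    have h1 : ∑ i, (b i + c i) = ∑ i, a i := Finset.sum_congr rfl fun i _ => hbc i
    rw [Finset.sum_add_distrib] at h1
    omega
  have hd0 : (d:ℝ) ≠ 0 := Nat.cast_ne_zero.2 (by omega)
  have hEb := E_sos d hd b hbs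
  have hEc := E_sos d hd c hcs
  have hsq := sos_sq ((∏ i, (X i : MvPolynomial (Fin n) ℝ) ^ (b i))
    - ∏ i, (X i : MvPolynomial (Fin n) ℝ) ^ (c i))
  have hsos := ((sos_C_mul (by norm_num : (0:ℝ) ≤ 1/2) hEb).add
    (sos_C_mul (by norm_num : (0:ℝ) ≤ 1/2) hEc)).add
    (sos_C_mul (by norm_num : (0:ℝ) ≤ 1/2) hsq)
  have hco : (∑ i, C ((a i : ℝ)/(2*(d:ℝ))) * (X i : MvPolynomial (Fin n) ℝ) ^ (2*d))
      = C (1/2) * (∑ i, C ((b i : ℝ)/(d:ℝ)) * (X i : MvPolynomial (Fin n) ℝ) ^ (2*d))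
        + C (1/2) * (∑ i, C ((c i : ℝ)/(d:ℝ)) * (X i : MvPolynomial (Fin n) ℝ) ^ (2*d)) := by
    rw [Finset.mul_sum, Finset.mul_sum, ← Finset.sum_add_distrib]
    refine Finset.sum_congr rfl fun i _ => ?_
    have hai : (a i : ℝ) = (b i : ℝ) + (c i : ℝ) := by
      rw [← Nat.cast_add, hbc i]
    have hC : (C ((a i : ℝ)/(2*(d:ℝ))) : MvPolynomial (Fin n) ℝ)
        = C (1/2) * C ((b i : ℝ)/(d:ℝ)) + C (1/2) * C ((c i : ℝ)/(d:ℝ)) := by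
      rw [← map_mul, ← map_mul, ← map_add]
      congr 1
      rw [hai]; field_simp
    rw [hC]; ring
  have hprodb : (∏ i, (X i : MvPolynomial (Fin n) ℝ) ^ (2 * b i))
      = (∏ i, (X i : MvPolynomial (Fin n) ℝ) ^ (b i))^2 := by
    rw [← Finset.prod_pow]
    exact Finset.prod_congr rfl fun i _ => by rw [← pow_mul, mul_comm (b i) 2]
  have hprodc : (∏ i, (X i : MvPolynomial (Fin n) ℝ) ^ (2 * c i))
      = (∏ i, (X i : MvPolynomial (Fin n) ℝ) ^ (c i))^2 := by
    rw [← Finset.prod_pow]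
    exact Finset.prod_congr rfl fun i _ => by rw [← pow_mul, mul_comm (c i) 2]
  have hproda : (∏ i, (X i : MvPolynomial (Fin n) ℝ) ^ (a i))
      = (∏ i, (X i : MvPolynomial (Fin n) ℝ) ^ (b i))
        * (∏ i, (X i : MvPolynomial (Fin n) ℝ) ^ (c i)) := by
    rw [← Finset.prod_mul_distrib]
    exact Finset.prod_congr rfl fun i _ => by rw [← pow_add, hbc i]
  have heq : (∑ i, C ((a i : ℝ)/(2*(d:ℝ))) * (X i : MvPolynomial (Fin n) ℝ) ^ (2*d))
      - ∏ i, (X i : MvPolynomial (Fin n) ℝ) ^ (a i)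
      = C (1/2) * ((∑ i, C ((b i : ℝ)/(d:ℝ)) * (X i : MvPolynomial (Fin n) ℝ) ^ (2*d))
          - ∏ i, (X i : MvPolynomial (Fin n) ℝ) ^ (2*b i))
        + C (1/2) * ((∑ i, C ((c i : ℝ)/(d:ℝ)) * (X i : MvPolynomial (Fin n) ℝ) ^ (2*d))
          - ∏ i, (X i : MvPolynomial (Fin n) ℝ) ^ (2*c i))
        + C (1/2) * ((∏ i, (X i : MvPolynomial (Fin n) ℝ) ^ (b i))
          - ∏ i, (X i : MvPolynomial (Fin n) ℝ) ^ (c i))^2 := by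
    rw [hco, hprodb, hprodc, hproda]
    have hhalf : (C ((1:ℝ)/2) : MvPolynomial (Fin n) ℝ) + C ((1:ℝ)/2) = 1 := by
      rw [← map_add]; norm_num
    linear_combination (((∏ i, (X i : MvPolynomial (Fin n) ℝ) ^ (b i))
      * (∏ i, (X i : MvPolynomial (Fin n) ℝ) ^ (c i))) : MvPolynomial (Fin n) ℝ) * hhalf
  rw [heq]
  exact hsos

end EvenAGM

section Block

variable {n : ℕ}

lemma rpow_sum_eq {x : ℝ} (hx : 0 < x) (e : Fin n → ℝ) :
    ∏ i, x ^ (e i) = x ^ (∑ i, e i) := by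
  induction (Finset.univ : Finset (Fin n)) using Finset.cons_induction with
  | empty => simp
  | cons i s his ih =>
    rw [Finset.prod_cons, Finset.sum_cons, ih, ← Real.rpow_add hx]

/-- The extremal block `∑ λᵢ Xᵢ^{2d} - c_max · X^a` is SOS, where
`c_max = 2d ∏ (λᵢ/aᵢ)^{aᵢ/2d}`. -/
lemma block_neg_sos (d : ℕ) (hd : 1 ≤ d) (a : Fin n → ℕ) (ha : ∑ i, a i = 2*d)
    (lam : Fin n → ℝ) (hlam : ∀ i, 0 ≤ lam i) :
    IsSumSq ((∑ i, C (lam i) * (X i : MvPolynomial (Fin n) ℝ) ^ (2*d))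
      - C (2*(d:ℝ) * ∏ i, (lam i / (a i : ℝ)) ^ ((a i : ℝ)/(2*(d:ℝ))))
        * ∏ i, (X i : MvPolynomial (Fin n) ℝ) ^ (a i)) := by
  have hd0 : (0:ℝ) < 2*(d:ℝ) := by positivity
  have hd0' : (2*(d:ℝ)) ≠ 0 := ne_of_gt hd0
  set t : Fin n → ℝ := fun i => (2*(d:ℝ) * lam i / (a i : ℝ)) ^ ((1:ℝ)/(2*(d:ℝ))) with htdef
  have hbase : ∀ i, 0 ≤ 2*(d:ℝ) * lam i / (a i : ℝ) := fun i =>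
    div_nonneg (by have := hlam i; positivity) (Nat.cast_nonneg _)
  have ht : ∀ i, 0 ≤ t i := fun i => Real.rpow_nonneg (hbase i) _
  -- substitution
  set φ : MvPolynomial (Fin n) ℝ →+* MvPolynomial (Fin n) ℝ :=
    (aeval (fun i => C (t i) * X i : Fin n → MvPolynomial (Fin n) ℝ)).toRingHom with hφdef
  have hG := sos_map φ (G_sos d hd a ha)
  have hφX : ∀ i, φ (X i) = C (t i) * X i := fun i => aeval_X _ i
  have hφC : ∀ r : ℝ, φ (C r) = C r := fun r => by
    simp [hφdef, algebraMap_eq]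
  have hφG : φ ((∑ i, C ((a i : ℝ)/(2*(d:ℝ))) * (X i : MvPolynomial (Fin n) ℝ) ^ (2*d))
      - ∏ i, (X i : MvPolynomial (Fin n) ℝ) ^ (a i))
      = (∑ i, C ((a i : ℝ)/(2*(d:ℝ)) * (t i)^(2*d)) * (X i : MvPolynomial (Fin n) ℝ) ^ (2*d))
        - C (∏ i, (t i)^(a i)) * ∏ i, (X i : MvPolynomial (Fin n) ℝ) ^ (a i) := by
    rw [map_sub, map_sum, map_prod]
    congr 1
    · refine Finset.sum_congr rfl fun i _ => ?_
      rw [map_mul, map_pow, hφX, hφC, mul_pow, ← map_pow, ← mul_assoc, ← map_mul]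
    · rw [map_prod (C : ℝ →+* MvPolynomial (Fin n) ℝ), ← Finset.prod_mul_distrib]
      refine Finset.prod_congr rfl fun i _ => ?_
      rw [map_pow, hφX, mul_pow, map_pow]
  rw [hφG] at hG
  -- identify the coefficients
  have hcoe : ∀ i, (a i : ℝ)/(2*(d:ℝ)) * (t i)^(2*d)
      = (if a i = 0 then 0 else lam i) := by
    intro i
    by_cases hai : a i = 0
    · simp [hai]
    · have h2 : (t i)^(2*d) = 2*(d:ℝ) * lam i / (a i : ℝ) := by
        rw [htdef]
        rw [← Real.rpow_natCast ((2*(d:ℝ) * lam i / (a i : ℝ)) ^ ((1:ℝ)/(2*(d:ℝ)))) (2*d),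
          ← Real.rpow_mul (hbase i)]
        rw [show (1:ℝ)/(2*(d:ℝ)) * ((2*d : ℕ):ℝ) = 1 by push_cast; field_simp]
        exact Real.rpow_one _
      rw [h2, if_neg hai]
      have hai' : ((a i : ℝ)) ≠ 0 := Nat.cast_ne_zero.2 hai
      field_simp
  have hcmax : ∏ i, (t i)^(a i)
      = 2*(d:ℝ) * ∏ i, (lam i / (a i : ℝ)) ^ ((a i : ℝ)/(2*(d:ℝ))) := by
    have h1 : ∀ i, (t i)^(a i)
        = ((2*(d:ℝ)) ^ ((a i : ℝ)/(2*(d:ℝ)))) * ((lam i / (a i : ℝ)) ^ ((a i : ℝ)/(2*(d:ℝ)))) := by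
      intro i
      rw [htdef]
      rw [← Real.rpow_natCast ((2*(d:ℝ) * lam i / (a i : ℝ)) ^ ((1:ℝ)/(2*(d:ℝ)))) (a i),
        ← Real.rpow_mul (hbase i), one_div, inv_mul_eq_div]
      have hsplit : 2*(d:ℝ) * lam i / (a i : ℝ) = (2*(d:ℝ)) * (lam i / (a i : ℝ)) := by
        ring
      rw [hsplit, Real.mul_rpow (le_of_lt hd0) (div_nonneg (hlam i) (Nat.cast_nonneg _))]
    rw [Finset.prod_congr rfl fun i _ => h1 i, Finset.prod_mul_distrib]
    congr 1
    rw [rpow_sum_eq hd0]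
    rw [show (∑ i, (a i : ℝ)/(2*(d:ℝ))) = (∑ i, (a i : ℝ))/(2*(d:ℝ)) by rw [Finset.sum_div]]
    rw [show (∑ i, (a i : ℝ)) = ((2*d : ℕ) : ℝ) by rw [← Nat.cast_sum, ha]]
    rw [show ((2*d : ℕ):ℝ)/(2*(d:ℝ)) = 1 by push_cast; field_simp]
    exact Real.rpow_one _
  rw [hcmax] at hG
  -- add back the vacuous diagonal terms
  have hrest : IsSumSq (∑ i, C (if a i = 0 then lam i else 0)
      * (X i : MvPolynomial (Fin n) ℝ) ^ (2*d)) := by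
    refine sos_sum _ _ fun i _ => ?_
    have : ((X i : MvPolynomial (Fin n) ℝ) ^ (2*d)) = ((X i)^d)^2 := by
      rw [← pow_mul, mul_comm]
    rw [this]
    refine sos_C_mul ?_ (sos_sq _)
    by_cases hai : a i = 0 <;> simp [hai, hlam i]
  have hfin : (∑ i, C (lam i) * (X i : MvPolynomial (Fin n) ℝ) ^ (2*d))
      - C (2*(d:ℝ) * ∏ i, (lam i / (a i : ℝ)) ^ ((a i : ℝ)/(2*(d:ℝ))))
        * ∏ i, (X i : MvPolynomial (Fin n) ℝ) ^ (a i)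
      = ((∑ i, C ((a i : ℝ)/(2*(d:ℝ)) * (t i)^(2*d)) * (X i : MvPolynomial (Fin n) ℝ) ^ (2*d))
        - C (2*(d:ℝ) * ∏ i, (lam i / (a i : ℝ)) ^ ((a i : ℝ)/(2*(d:ℝ))))
          * ∏ i, (X i : MvPolynomial (Fin n) ℝ) ^ (a i))
        + ∑ i, C (if a i = 0 then lam i else 0) * (X i : MvPolynomial (Fin n) ℝ) ^ (2*d) := by
    have hsum : ∀ i ∈ Finset.univ, C (lam i) * (X i : MvPolynomial (Fin n) ℝ) ^ (2*d)
        = C ((a i : ℝ)/(2*(d:ℝ)) * (t i)^(2*d)) * (X i : MvPolynomial (Fin n) ℝ) ^ (2*d)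
          + C (if a i = 0 then lam i else 0) * (X i : MvPolynomial (Fin n) ℝ) ^ (2*d) := by
      intro i _
      rw [hcoe i, ← add_mul, ← map_add]
      by_cases hai : a i = 0 <;> simp [hai]
    rw [Finset.sum_congr rfl hsum, Finset.sum_add_distrib]
    ring
  rw [hfin]
  exact hG.add hrest

end Block

section Block2

variable {n : ℕ}

lemma block_pos_sos (d : ℕ) (hd : 1 ≤ d) (a : Fin n → ℕ) (ha : ∑ i, a i = 2*d)
    (lam : Fin n → ℝ) (hlam : ∀ i, 0 ≤ lam i) {j : Fin n} (hodd : Odd (a j)) :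
    IsSumSq ((∑ i, C (lam i) * (X i : MvPolynomial (Fin n) ℝ) ^ (2*d))
      + C (2*(d:ℝ) * ∏ i, (lam i / (a i : ℝ)) ^ ((a i : ℝ)/(2*(d:ℝ))))
        * ∏ i, (X i : MvPolynomial (Fin n) ℝ) ^ (a i)) := by
  set ψ : MvPolynomial (Fin n) ℝ →+* MvPolynomial (Fin n) ℝ :=
    (aeval (fun i => if i = j then -X j else X i : Fin n → MvPolynomial (Fin n) ℝ)).toRingHom
      with hψdef
  have hψX : ∀ i, ψ (X i) = if i = j then -X j else X i := fun i => aeval_X _ i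
  have hψC : ∀ r : ℝ, ψ (C r) = C r := fun r => by simp [hψdef, algebraMap_eq]
  have hblock := sos_map ψ (block_neg_sos d hd a ha lam hlam)
  have h1 : ψ ((∑ i, C (lam i) * (X i : MvPolynomial (Fin n) ℝ) ^ (2*d))
      - C (2*(d:ℝ) * ∏ i, (lam i / (a i : ℝ)) ^ ((a i : ℝ)/(2*(d:ℝ))))
        * ∏ i, (X i : MvPolynomial (Fin n) ℝ) ^ (a i))
      = (∑ i, C (lam i) * (X i : MvPolynomial (Fin n) ℝ) ^ (2*d))
        + C (2*(d:ℝ) * ∏ i, (lam i / (a i : ℝ)) ^ ((a i : ℝ)/(2*(d:ℝ))))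
          * ∏ i, (X i : MvPolynomial (Fin n) ℝ) ^ (a i) := by
    rw [map_sub, map_sum, map_mul, hψC, map_prod]
    have h2 : ∀ i ∈ Finset.univ, ψ (C (lam i) * (X i : MvPolynomial (Fin n) ℝ) ^ (2*d))
        = C (lam i) * (X i : MvPolynomial (Fin n) ℝ) ^ (2*d) := by
      intro i _
      rw [map_mul, hψC, map_pow, hψX]
      by_cases hij : i = j
      · subst hij
        rw [if_pos rfl, Even.neg_pow (by exact even_two_mul d)]
      · rw [if_neg hij]
    rw [Finset.sum_congr rfl h2]
    have h3 : ∏ i, ψ ((X i : MvPolynomial (Fin n) ℝ) ^ (a i))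
        = - ∏ i, (X i : MvPolynomial (Fin n) ℝ) ^ (a i) := by
      rw [← Finset.mul_prod_erase Finset.univ
          (fun i => ψ ((X i : MvPolynomial (Fin n) ℝ) ^ (a i))) (Finset.mem_univ j),
        ← Finset.mul_prod_erase Finset.univ
          (fun i => (X i : MvPolynomial (Fin n) ℝ) ^ (a i)) (Finset.mem_univ j)]
      have h4 : ∏ i ∈ Finset.univ.erase j, ψ ((X i : MvPolynomial (Fin n) ℝ) ^ (a i))
          = ∏ i ∈ Finset.univ.erase j, (X i : MvPolynomial (Fin n) ℝ) ^ (a i) := by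
        refine Finset.prod_congr rfl fun i hi => ?_
        rw [map_pow, hψX, if_neg (Finset.mem_erase.1 hi).1]
      rw [h4, map_pow, hψX, if_pos rfl, Odd.neg_pow hodd]
      ring
    rw [h3]
    ring
  rw [h1] at hblock
  exact hblock

lemma block_sos (d : ℕ) (hd : 1 ≤ d) (a : Fin n → ℕ) (ha : ∑ i, a i = 2*d)
    (lam : Fin n → ℝ) (hlam : ∀ i, 0 ≤ lam i) (c : ℝ)
    (hc : |c| ≤ 2*(d:ℝ) * ∏ i, (lam i / (a i : ℝ)) ^ ((a i : ℝ)/(2*(d:ℝ)))) :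
    IsSumSq ((∑ i, C (lam i) * (X i : MvPolynomial (Fin n) ℝ) ^ (2*d))
      + C c * ∏ i, (X i : MvPolynomial (Fin n) ℝ) ^ (a i)) := by
  set cmax : ℝ := 2*(d:ℝ) * ∏ i, (lam i / (a i : ℝ)) ^ ((a i : ℝ)/(2*(d:ℝ))) with hcmax
  by_cases heven : ∀ i, Even (a i)
  · -- even case : X^a is a square
    have hsq : ∃ q : MvPolynomial (Fin n) ℝ, (∏ i, (X i : MvPolynomial (Fin n) ℝ) ^ (a i)) = q^2 := by
      refine ⟨∏ i, (X i : MvPolynomial (Fin n) ℝ) ^ (a i / 2), ?_⟩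
      rw [← Finset.prod_pow]
      refine Finset.prod_congr rfl fun i _ => ?_
      rw [← pow_mul]
      congr 1
      obtain ⟨k, hk⟩ := heven i
      omega
    obtain ⟨q, hq⟩ := hsq
    have hkey : (∑ i, C (lam i) * (X i : MvPolynomial (Fin n) ℝ) ^ (2*d))
        + C c * ∏ i, (X i : MvPolynomial (Fin n) ℝ) ^ (a i)
        = ((∑ i, C (lam i) * (X i : MvPolynomial (Fin n) ℝ) ^ (2*d))
            - C cmax * ∏ i, (X i : MvPolynomial (Fin n) ℝ) ^ (a i))
          + C (c + cmax) * q^2 := by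
      rw [hq]
      have : (C c : MvPolynomial (Fin n) ℝ) = C (c + cmax) - C cmax := by
        rw [← map_sub]; congr 1; ring
      rw [this]; ring
    rw [hkey]
    refine (block_neg_sos d hd a ha lam hlam).add ?_
    refine sos_C_mul ?_ (sos_sq q)
    have := abs_le.1 hc
    linarith [this.1]
  · push_neg at heven
    obtain ⟨j, hj⟩ := heven
    rw [Nat.not_even_iff_odd] at hj
    have hpos := block_pos_sos d hd a ha lam hlam hj
    have hneg := block_neg_sos d hd a ha lam hlam
    rcases eq_or_lt_of_le (le_trans (abs_nonneg c) hc) with h0 | h0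
    · -- cmax = 0, hence c = 0
      have hc0 : c = 0 := by
        have : |c| ≤ 0 := by rw [← h0] at hc; exact hc
        exact abs_eq_zero.1 (le_antisymm this (abs_nonneg c))
      rw [hc0, map_zero, zero_mul, add_zero]
      exact sos_sum _ _ fun i _ => by
        rw [show 2*d = d*2 by ring, pow_mul]
        exact sos_C_mul (hlam i) (sos_sq _)
    · -- convex combination
      set θ : ℝ := (cmax + c)/(2*cmax) with hθdef
      have hcm : cmax ≠ 0 := ne_of_gt h0
      have habs := abs_le.1 hc
      have hθ0 : 0 ≤ θ := by
        apply div_nonneg _ (by linarith)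
        linarith [habs.1]
      have hθ1 : 0 ≤ 1 - θ := by
        rw [hθdef]
        rw [sub_nonneg, div_le_one (by linarith)]
        linarith [habs.2]
      have hkey : (∑ i, C (lam i) * (X i : MvPolynomial (Fin n) ℝ) ^ (2*d))
          + C c * ∏ i, (X i : MvPolynomial (Fin n) ℝ) ^ (a i)
          = C θ * ((∑ i, C (lam i) * (X i : MvPolynomial (Fin n) ℝ) ^ (2*d))
              + C cmax * ∏ i, (X i : MvPolynomial (Fin n) ℝ) ^ (a i))
            + C (1-θ) * ((∑ i, C (lam i) * (X i : MvPolynomial (Fin n) ℝ) ^ (2*d))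
              - C cmax * ∏ i, (X i : MvPolynomial (Fin n) ℝ) ^ (a i)) := by
        have e1 : (C θ : MvPolynomial (Fin n) ℝ) + C (1-θ) = 1 := by
          rw [← map_add]; norm_num
        have e2 : (C θ : MvPolynomial (Fin n) ℝ) * C cmax - C (1-θ) * C cmax = C c := by
          rw [← map_mul, ← map_mul, ← map_sub]
          congr 1
          rw [hθdef]
          field_simp
          ring
        linear_combination (-(∑ i, C (lam i) * (X i : MvPolynomial (Fin n) ℝ) ^ (2*d))) * e1
          - (∏ i, (X i : MvPolynomial (Fin n) ℝ) ^ (a i)) * e2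
      rw [hkey]
      exact (sos_C_mul hθ0 hpos).add (sos_C_mul hθ1 hneg)

end Block2

/-- Improved Fidalgo–Kovacec criterion: for a form `f` of degree `2d` with
`f_{2d,i} > 0`, if `Σ_{α∈Δ} |f_α|·(α^α)^{1/2d} / (2d·Π_i f_{2d,i}^{α_i/2d}) ≤ 1`
then `f` is a sum of squares.  (Convention `0^0 = 1`.) -/
theorem fk_improved_criterion_sos {n d : ℕ} (hd : 1 ≤ d)
    (f : MvPolynomial (Fin n) ℝ) (hf : f.IsHomogeneous (2 * d))
    (Δ : Finset (Fin n →₀ ℕ))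
    (hΔ : ∀ α, α ∈ Δ ↔ α ∈ f.support ∧ (¬ ∃ i, α = Finsupp.single i (2 * d)) ∧
      (f.coeff α < 0 ∨ ∃ i, Odd (α i)))
    (hpos : ∀ i, 0 < f.coeff (Finsupp.single i (2 * d)))
    (hsum : ∑ α ∈ Δ,
        |f.coeff α| * (∏ j, ((α j : ℕ) : ℝ) ^ (α j)) ^ (1 / ((2 * d : ℕ) : ℝ)) /
          (((2 * d : ℕ) : ℝ) *
            ∏ i, (f.coeff (Finsupp.single i (2 * d))) ^ (((α i : ℕ) : ℝ) / ((2 * d : ℕ) : ℝ)))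
      ≤ 1) :
    IsSumSq f := by
  classical
  have hd2 : (2*d : ℕ) ≠ 0 := by omega
  have hdR : ((2*d : ℕ) : ℝ) = 2*(d:ℝ) := by push_cast; ring
  have hdR0 : (0:ℝ) < 2*(d:ℝ) := by positivity
  set c : Fin n → ℝ := fun i => f.coeff (Finsupp.single i (2*d)) with hcdef
  have hcpos : ∀ i, 0 < c i := hpos
  set κ : (Fin n →₀ ℕ) → ℝ := fun α =>
      |f.coeff α| * (∏ j, ((α j : ℕ) : ℝ) ^ (α j)) ^ (1 / ((2 * d : ℕ) : ℝ)) /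
        (((2 * d : ℕ) : ℝ) * ∏ i, (c i) ^ (((α i : ℕ) : ℝ) / ((2 * d : ℕ) : ℝ))) with hκdef
  have hK : ∑ α ∈ Δ, κ α ≤ 1 := hsum
  -- degrees of support elements
  have hdeg : ∀ α ∈ f.support, (∑ i, α i) = 2*d := by
    intro α hα
    have hne := MvPolynomial.mem_support_iff.1 hα
    have hdeg' : α.degree = 2*d := by
      by_contra hne'
      exact hne (hf.coeff_eq_zero hne')
    rw [← hdeg']
    rw [Finsupp.degree]
    exact (Finset.sum_subset (Finset.subset_univ _)
      (fun i _ hi => Finsupp.notMem_support_iff.1 hi)).symm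
  -- positivity of κ on Δ
  have hΔsupp : ∀ α ∈ Δ, α ∈ f.support := fun α hα => ((hΔ α).1 hα).1
  have hκnonneg : ∀ α, 0 ≤ κ α := by
    intro α
    rw [hκdef]
    have h1 : (0:ℝ) ≤ |f.coeff α| := abs_nonneg _
    have h2 : (0:ℝ) ≤ (∏ j, ((α j : ℕ) : ℝ) ^ (α j)) ^ (1 / ((2 * d : ℕ) : ℝ)) :=
      Real.rpow_nonneg (Finset.prod_nonneg fun j _ => by positivity) _
    have h3 : (0:ℝ) ≤ ((2 * d : ℕ) : ℝ) * ∏ i, (c i) ^ (((α i : ℕ) : ℝ) / ((2 * d : ℕ) : ℝ)) := by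
      apply mul_nonneg (Nat.cast_nonneg _)
      exact Finset.prod_nonneg fun i _ => Real.rpow_nonneg (le_of_lt (hcpos i)) _
    exact div_nonneg (mul_nonneg h1 h2) h3
  -- vertex set
  set V : Finset (Fin n →₀ ℕ) :=
    Finset.image (fun i => Finsupp.single i (2*d)) Finset.univ with hVdef
  have hmemV : ∀ α : Fin n →₀ ℕ, α ∈ V ↔ ∃ i, α = Finsupp.single i (2*d) := by
    intro α
    rw [hVdef, Finset.mem_image]
    constructor
    · rintro ⟨i, _, hi⟩; exact ⟨i, hi.symm⟩
    · rintro ⟨i, hi⟩; exact ⟨i, Finset.mem_univ i, hi.symm⟩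
  have hVsupp : V ⊆ f.support := by
    intro α hα
    obtain ⟨i, hi⟩ := (hmemV α).1 hα
    rw [hi]
    exact MvPolynomial.mem_support_iff.2 (ne_of_gt (hpos i))
  have hdisj : Disjoint V Δ := by
    rw [Finset.disjoint_left]
    intro α hαV hαΔ
    exact ((hΔ α).1 hαΔ).2.1 ((hmemV α).1 hαV)
  have hsubset : V ∪ Δ ⊆ f.support :=
    Finset.union_subset hVsupp (fun α hα => hΔsupp α hα)
  -- monomial rewriting
  have hmono : ∀ α : Fin n →₀ ℕ, (MvPolynomial.monomial α (f.coeff α))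
      = C (f.coeff α) * ∏ i, (X i : MvPolynomial (Fin n) ℝ) ^ (α i) := by
    intro α
    rw [monomial_eq]
    congr 1
    exact Finsupp.prod_fintype _ _ fun i => pow_zero _
  -- decomposition of f
  have hsplit : f = (∑ i, C (c i) * (X i : MvPolynomial (Fin n) ℝ) ^ (2*d))
      + (∑ α ∈ Δ, MvPolynomial.monomial α (f.coeff α))
      + (∑ α ∈ f.support \ (V ∪ Δ), MvPolynomial.monomial α (f.coeff α)) := by
    have h1 := MvPolynomial.support_sum_monomial_coeff f
    have h2 : ∑ α ∈ f.support, MvPolynomial.monomial α (f.coeff α)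
        = (∑ α ∈ f.support \ (V ∪ Δ), MvPolynomial.monomial α (f.coeff α))
          + ∑ α ∈ V ∪ Δ, MvPolynomial.monomial α (f.coeff α) :=
      (Finset.sum_sdiff hsubset).symm
    have h3 : ∑ α ∈ V ∪ Δ, MvPolynomial.monomial α (f.coeff α)
        = (∑ α ∈ V, MvPolynomial.monomial α (f.coeff α))
          + ∑ α ∈ Δ, MvPolynomial.monomial α (f.coeff α) :=
      Finset.sum_union hdisj
    have h4 : ∑ α ∈ V, MvPolynomial.monomial α (f.coeff α)
        = ∑ i, C (c i) * (X i : MvPolynomial (Fin n) ℝ) ^ (2*d) := by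
      rw [hVdef, Finset.sum_image
        (fun i _ j _ h => Finsupp.single_left_injective hd2 h)]
      refine Finset.sum_congr rfl fun i _ => ?_
      rw [X_pow_eq_monomial, C_mul_monomial, mul_one]
    conv_lhs => rw [← h1]
    rw [h2, h3, h4]
    ring
  -- splitting the vertex part
  set K : ℝ := ∑ α ∈ Δ, κ α with hKdef
  have hVsplit : (∑ i, C (c i) * (X i : MvPolynomial (Fin n) ℝ) ^ (2*d))
      = (∑ i, C ((1 - K) * c i) * (X i : MvPolynomial (Fin n) ℝ) ^ (2*d))
        + ∑ α ∈ Δ, ∑ i, C (κ α * c i) * (X i : MvPolynomial (Fin n) ℝ) ^ (2*d) := by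
    rw [Finset.sum_comm, ← Finset.sum_add_distrib]
    refine Finset.sum_congr rfl fun i _ => ?_
    rw [← Finset.sum_mul, ← map_sum, ← add_mul, ← map_add]
    congr 2
    rw [show (∑ α ∈ Δ, κ α * c i) = K * c i by rw [hKdef, Finset.sum_mul]]
    ring
  -- each Δ-block is SOS
  have hblock : ∀ α ∈ Δ, IsSumSq ((∑ i, C (κ α * c i) * (X i : MvPolynomial (Fin n) ℝ) ^ (2*d))
      + C (f.coeff α) * ∏ i, (X i : MvPolynomial (Fin n) ℝ) ^ (α i)) := by
    intro α hα
    have hαs := hΔsupp α hα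
    have hcoeff0 : f.coeff α ≠ 0 := MvPolynomial.mem_support_iff.1 hαs
    have hα2d : (∑ i, α i) = 2*d := hdeg α hαs
    have hα2dR : (∑ i, ((α i : ℕ):ℝ)) = 2*(d:ℝ) := by
      rw [← hdR, ← Nat.cast_sum, hα2d]
    refine block_sos d hd (fun i => α i) hα2d (fun i => κ α * c i)
      (fun i => mul_nonneg (hκnonneg α) (le_of_lt (hcpos i))) (f.coeff α) ?_
    -- compute: cmax = |f.coeff α|
    set e : Fin n → ℝ := fun i => ((α i : ℕ):ℝ)/(2*(d:ℝ)) with hedef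
    have hesum : (∑ i, e i) = 1 := by
      rw [hedef, ← Finset.sum_div, hα2dR]
      field_simp
    set Pc : ℝ := ∏ i, (c i) ^ (e i) with hPcdef
    set Pa : ℝ := ∏ i, ((α i : ℕ):ℝ) ^ (e i) with hPadef
    have hPc_pos : 0 < Pc :=
      Finset.prod_pos fun i _ => Real.rpow_pos_of_pos (hcpos i) _
    have hPa_pos : 0 < Pa := by
      refine Finset.prod_pos fun i _ => ?_
      by_cases hz : α i = 0
      · rw [hedef]; simp [hz]
      · exact Real.rpow_pos_of_pos (by exact_mod_cast Nat.pos_of_ne_zero hz) _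
    have hPa_eq : (∏ j, ((α j : ℕ) : ℝ) ^ (α j)) ^ (1 / ((2 * d : ℕ) : ℝ)) = Pa := by
      rw [← Real.finset_prod_rpow _ _ (fun j _ => by positivity) _]
      refine Finset.prod_congr rfl fun j _ => ?_
      rw [← Real.rpow_natCast ((α j : ℕ):ℝ) (α j), ← Real.rpow_mul (Nat.cast_nonneg _)]
      rw [hedef, hdR]
      congr 1
      ring
    have hPc_eq : (∏ i, (c i) ^ (((α i : ℕ):ℝ)/((2*d:ℕ):ℝ))) = Pc :=
      Finset.prod_congr rfl fun i _ => by simp only [hedef, hdR]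
    have hκα : κ α = |f.coeff α| * Pa / (2*(d:ℝ) * Pc) := by
      simp only [hκdef]
      rw [hPa_eq, hPc_eq, hdR]
    have hκpos : 0 < κ α := by
      rw [hκα]
      have : 0 < |f.coeff α| := abs_pos.2 hcoeff0
      positivity
    have hfactor : ∀ i, ((κ α * c i)/((α i : ℕ):ℝ)) ^ (e i)
        = (κ α) ^ (e i) * ((c i) ^ (e i) / ((α i : ℕ):ℝ) ^ (e i)) := by
      intro i
      rw [mul_div_assoc, Real.mul_rpow (le_of_lt hκpos)
        (div_nonneg (le_of_lt (hcpos i)) (Nat.cast_nonneg _)),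
        Real.div_rpow (le_of_lt (hcpos i)) (Nat.cast_nonneg _)]
    have hcmax : 2*(d:ℝ) * ∏ i, ((κ α * c i)/((α i : ℕ):ℝ)) ^ (e i) = |f.coeff α| := by
      rw [Finset.prod_congr rfl fun i _ => hfactor i, Finset.prod_mul_distrib,
        rpow_sum_eq hκpos, hesum, Real.rpow_one]
      rw [show (∏ i, ((c i) ^ (e i) / ((α i : ℕ):ℝ) ^ (e i))) = Pc / Pa by
        rw [hPcdef, hPadef, ← Finset.prod_div_distrib]]
      rw [hκα]
      field_simp
    have hgoal : (2*(d:ℝ) * ∏ i, ((κ α * c i)/((α i : ℕ):ℝ)) ^ (((α i : ℕ):ℝ)/(2*(d:ℝ))))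
        = |f.coeff α| := by
      rw [← hcmax]
    exact le_of_eq hgoal.symm
  -- leftover diagonal is SOS
  have hdiag : IsSumSq (∑ i, C ((1 - K) * c i) * (X i : MvPolynomial (Fin n) ℝ) ^ (2*d)) := by
    refine sos_sum _ _ fun i _ => ?_
    rw [show 2*d = d*2 by ring, pow_mul]
    refine sos_C_mul ?_ (sos_sq _)
    exact mul_nonneg (by linarith) (le_of_lt (hcpos i))
  -- remaining support terms are SOS
  have hrest : ∀ α ∈ f.support \ (V ∪ Δ), IsSumSq (MvPolynomial.monomial α (f.coeff α)) := by
    intro α hα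
    obtain ⟨hαs, hαn⟩ := Finset.mem_sdiff.1 hα
    rw [Finset.mem_union] at hαn
    push_neg at hαn
    have hnotv : ¬ ∃ i, α = Finsupp.single i (2*d) := fun h => hαn.1 ((hmemV α).2 h)
    have hgood : ¬ (f.coeff α < 0 ∨ ∃ i, Odd (α i)) := by
      intro h
      exact hαn.2 ((hΔ α).2 ⟨hαs, hnotv, h⟩)
    push_neg at hgood
    obtain ⟨hcnn, heven⟩ := hgood
    have heven' : ∀ i, Even (α i) := fun i => Nat.not_odd_iff_even.1 (heven i)
    have hsq : (∏ i, (X i : MvPolynomial (Fin n) ℝ) ^ (α i))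
        = (∏ i, (X i : MvPolynomial (Fin n) ℝ) ^ (α i / 2))^2 := by
      rw [← Finset.prod_pow]
      refine Finset.prod_congr rfl fun i _ => ?_
      rw [← pow_mul]
      congr 1
      obtain ⟨k, hk⟩ := heven' i
      omega
    rw [hmono α, hsq]
    exact sos_C_mul hcnn (sos_sq _)
  -- assemble
  rw [hsplit, hVsplit]
  have hΔsos : IsSumSq (∑ α ∈ Δ, (∑ i, C (κ α * c i) * (X i : MvPolynomial (Fin n) ℝ) ^ (2*d))
      + ∑ α ∈ Δ, MvPolynomial.monomial α (f.coeff α)) := by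
    rw [← Finset.sum_add_distrib]
    refine sos_sum _ _ fun α hα => ?_
    rw [hmono α]
    exact hblock α hα
  have hfinal := ((hdiag.add hΔsos).add (sos_sum _ _ hrest))
  rw [add_assoc _ (∑ α ∈ Δ, ∑ i, C (κ α * c i) * (X i : MvPolynomial (Fin n) ℝ) ^ (2*d))]
  exact hfinal
end

section
/- Suppose min_{i} f_{2d,i} ≥ (1/2d)·Σ_{α∈Δ}|f_α|·(α^α)^{1/2d} with all f_{2d,i} > 0. Then Σ_{α∈Δ} |f_α|·(α^α)^{1/2d}/(2d·Π_{i=1}^n f_{2d,i}^{α_i/2d}) ≤ 1. In other words, the hypothesis of the Fidalgo–Kovacec criterion implies the hypothesis of its improved version. -/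
/-- The hypothesis of the Fidalgo–Kovacec criterion implies the hypothesis of
its improved version: if `c i > 0` for all `i` and
`min_i c i ≥ (1/2d)·Σ_{α∈Δ}|f_α|·(α^α)^{1/2d}`, then
`Σ_{α∈Δ} |f_α|·(α^α)^{1/2d}/(2d·Π_i c_i^{α_i/2d}) ≤ 1`. -/
theorem fk_implies_improved {n d : ℕ} (hd : 1 ≤ d) (hn : 0 < n)
    (Δ : Finset (Fin n →₀ ℕ)) (hΔdeg : ∀ α ∈ Δ, ∑ i, α i = 2 * d)
    (fc : (Fin n →₀ ℕ) → ℝ) (c : Fin n → ℝ) (hc : ∀ i, 0 < c i)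
    (hmin : ∀ i, (1 / ((2 * d : ℕ) : ℝ)) *
        ∑ α ∈ Δ, |fc α| * (∏ j, ((α j : ℕ) : ℝ) ^ (α j)) ^ (1 / ((2 * d : ℕ) : ℝ))
      ≤ c i) :
    ∑ α ∈ Δ,
        |fc α| * (∏ j, ((α j : ℕ) : ℝ) ^ (α j)) ^ (1 / ((2 * d : ℕ) : ℝ)) /
          (((2 * d : ℕ) : ℝ) * ∏ i, (c i) ^ (((α i : ℕ) : ℝ) / ((2 * d : ℕ) : ℝ)))
      ≤ 1 := by
  haveI : Nonempty (Fin n) := ⟨⟨0, hn⟩⟩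
  set D : ℝ := ((2 * d : ℕ) : ℝ) with hD
  have hDpos : (0 : ℝ) < D := by
    have h : 0 < 2 * d := by omega
    rw [hD]; exact_mod_cast h
  set t : (Fin n →₀ ℕ) → ℝ :=
    fun α => |fc α| * (∏ j, ((α j : ℕ) : ℝ) ^ (α j)) ^ (1 / D) with ht
  have htn : ∀ α, 0 ≤ t α := by
    intro α
    apply mul_nonneg (abs_nonneg _)
    apply Real.rpow_nonneg
    exact Finset.prod_nonneg fun j _ => pow_nonneg (Nat.cast_nonneg _) _
  set m : ℝ := Finset.univ.inf' Finset.univ_nonempty c with hm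
  have hmpos : 0 < m := by
    obtain ⟨i, _, hi⟩ := Finset.exists_mem_eq_inf' Finset.univ_nonempty c
    rw [hm, hi]; exact hc i
  have hmle : ∀ i, m ≤ c i := fun i => Finset.inf'_le _ (Finset.mem_univ i)
  have hSm : ∑ α ∈ Δ, t α ≤ D * m := by
    obtain ⟨i, _, hi⟩ := Finset.exists_mem_eq_inf' Finset.univ_nonempty c
    have := hmin i
    rw [one_div, inv_mul_le_iff₀ hDpos] at this
    rw [hm, hi]
    exact this
  have key : ∀ α ∈ Δ, m ≤ ∏ i, (c i) ^ (((α i : ℕ) : ℝ) / D) := by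
    intro α hα
    have h1 : ∏ i, m ^ (((α i : ℕ) : ℝ) / D) ≤ ∏ i, (c i) ^ (((α i : ℕ) : ℝ) / D) := by
      apply Finset.prod_le_prod
      · intro i _; exact Real.rpow_nonneg hmpos.le _
      · intro i _
        exact Real.rpow_le_rpow hmpos.le (hmle i)
          (div_nonneg (Nat.cast_nonneg _) hDpos.le)
    calc m = m ^ (∑ i, ((α i : ℕ) : ℝ) / D) := by
            rw [← Finset.sum_div]
            have : (∑ i, ((α i : ℕ) : ℝ)) = D := by
              rw [hD, ← Nat.cast_sum]
              exact_mod_cast congrArg (Nat.cast : ℕ → ℝ) (hΔdeg α hα)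
            rw [this, div_self hDpos.ne', Real.rpow_one]
      _ = ∏ i, m ^ (((α i : ℕ) : ℝ) / D) := Real.rpow_sum_of_pos hmpos _ _
      _ ≤ _ := h1
  calc ∑ α ∈ Δ, t α / (D * ∏ i, (c i) ^ (((α i : ℕ) : ℝ) / D))
      ≤ ∑ α ∈ Δ, t α / (D * m) := by
        apply Finset.sum_le_sum
        intro α hα
        apply div_le_div_of_nonneg_left (htn α) (by positivity)
        exact mul_le_mul_of_nonneg_left (key α hα) hDpos.le
    _ = (∑ α ∈ Δ, t α) / (D * m) := by rw [Finset.sum_div]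
    _ ≤ 1 := by
        rw [div_le_one (by positivity)]
        simpa using hSm
end

section
/- Let f = Σ_i f_{2d,i}X_i^{2d} + f_0 + f_α X^α where α ∈ ℕ^n with 0 < |α| < 2d, f_α X^α not a square (f_α < 0 or some α_i odd), and suppose f − r ≥ 0 on ℝ^n for some real r. Then f_{2d,i} ≥ 0 for all i, f_0 ≥ r, and f_α^{2d}·α^α·(2d−|α|)^{2d−|α|} ≤ (2d)^{2d}·Π_i f_{2d,i}^{α_i}·(f_0−r)^{2d−|α|}. -/
lemma aux_pos {n d : ℕ} (hd : 1 ≤ d) (α : Fin n → ℕ)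
    (he : 0 < ∑ i, α i) (h2d : ∑ i, α i < 2 * d)
    (c : Fin n → ℝ) (hc : ∀ i, 0 < c i) (g : ℝ) (hg : 0 < g)
    (F : ℝ) (hF : 0 ≤ F)
    (hkey : ∀ t : Fin n → ℝ, (∀ i, 0 ≤ t i) →
      F * ∏ i, t i ^ α i ≤ ∑ i, c i * t i ^ (2 * d) + g) :
    F ^ (2 * d) * (∏ i, (α i : ℝ) ^ (α i)) *
        ((2 * d - ∑ i, α i : ℕ) : ℝ) ^ (2 * d - ∑ i, α i)
      ≤ ((2 * d : ℕ) : ℝ) ^ (2 * d) * (∏ i, (c i) ^ (α i)) *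
        g ^ (2 * d - ∑ i, α i) := by
  set E : ℕ := ∑ i, α i with hE
  set m : ℕ := 2 * d - E with hm
  have hEm : E + m = 2 * d := by omega
  have hm0 : 0 < m := by omega
  have hmR : (0:ℝ) < (m : ℝ) := by exact_mod_cast hm0
  set u : ℝ := g / m with hu
  have hu0 : 0 < u := div_pos hg hmR
  have hgu : g = u * m := by rw [hu, div_mul_cancel₀ g hmR.ne']
  set T : Fin n → ℝ := fun i => (α i : ℝ) * u / c i with hT
  have hT0 : ∀ i, 0 ≤ T i := fun i =>
    div_nonneg (mul_nonneg (Nat.cast_nonneg _) hu0.le) (hc i).le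
  set t : Fin n → ℝ := fun i => T i ^ (((2 * d : ℕ) : ℝ))⁻¹ with ht
  have ht0 : ∀ i, 0 ≤ t i := fun i => Real.rpow_nonneg (hT0 i) _
  have h2dne : ((2 * d : ℕ) : ℝ) ≠ 0 := Nat.cast_ne_zero.mpr (by omega)
  have htT : ∀ i, t i ^ (2 * d) = T i := by
    intro i
    rw [ht, ← Real.rpow_natCast (T i ^ ((((2 * d : ℕ) : ℝ))⁻¹)) (2 * d),
      ← Real.rpow_mul (hT0 i), inv_mul_cancel₀ h2dne, Real.rpow_one]
  have hsum : ∑ i, c i * t i ^ (2 * d) + g = ((2 * d : ℕ) : ℝ) * u := by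
    have hca : ∀ i, c i * t i ^ (2 * d) = (α i : ℝ) * u := by
      intro i
      rw [htT i, hT]
      field_simp [(hc i).ne']
    have hsumα : ∑ i, ((α i : ℝ)) = (E : ℝ) := by rw [hE]; push_cast; rfl
    rw [Finset.sum_congr rfl fun i _ => hca i, ← Finset.sum_mul, hsumα, hgu]
    rw [show ((2 * d : ℕ) : ℝ) = ((E : ℝ) + (m : ℝ)) by exact_mod_cast congrArg (Nat.cast : ℕ → ℝ) hEm.symm]
    ring
  have main := hkey t ht0
  rw [hsum] at main
  have main2 := pow_le_pow_left₀ (mul_nonneg hF (Finset.prod_nonneg fun i _ => pow_nonneg (ht0 i) _)) main (2 * d)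
  have hP : (∏ i, t i ^ α i) ^ (2 * d) = ∏ i, T i ^ α i := by
    rw [← Finset.prod_pow]
    exact Finset.prod_congr rfl fun i _ => by
      rw [← pow_mul, mul_comm (α i), pow_mul, htT i]
  have hprodT : ∏ i, T i ^ α i
      = (∏ i, (α i : ℝ) ^ α i) * u ^ E / ∏ i, c i ^ α i := by
    rw [hT]
    simp only [div_pow, mul_pow]
    rw [Finset.prod_div_distrib, Finset.prod_mul_distrib,
      Finset.prod_pow_eq_pow_sum, ← hE]
  rw [mul_pow, hP, hprodT, mul_pow] at main2
  set A : ℝ := ∏ i, (α i : ℝ) ^ α i with hA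
  set C : ℝ := ∏ i, c i ^ α i with hC
  have hA0 : 0 ≤ A := Finset.prod_nonneg fun i _ => by positivity
  have hC0 : 0 < C := Finset.prod_pos fun i _ => pow_pos (hc i) _
  -- main2 : F^(2d) * (A * u^E / C) ≤ (2d)^(2d) * u^(2d)
  have h1 : F ^ (2 * d) * A * u ^ E ≤ ((2 * d : ℕ) : ℝ) ^ (2 * d) * u ^ (2 * d) * C := by
    rw [← div_le_iff₀ hC0]
    calc F ^ (2 * d) * A * u ^ E / C = F ^ (2 * d) * (A * u ^ E / C) := by ring
    _ ≤ ((2 * d : ℕ) : ℝ) ^ (2 * d) * u ^ (2 * d) := main2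
  have hupow : u ^ (2 * d) = u ^ E * u ^ m := by rw [← pow_add, hEm]
  rw [hupow] at h1
  have h2 : F ^ (2 * d) * A ≤ ((2 * d : ℕ) : ℝ) ^ (2 * d) * u ^ m * C := by
    have hEu : (0:ℝ) < u ^ E := pow_pos hu0 E
    have := (mul_le_mul_iff_of_pos_right hEu).mp (by
      calc F ^ (2 * d) * A * u ^ E ≤ ((2 * d : ℕ) : ℝ) ^ (2 * d) * (u ^ E * u ^ m) * C := h1
      _ = ((2 * d : ℕ) : ℝ) ^ (2 * d) * u ^ m * C * u ^ E := by ring)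
    exact this
  have h3 := mul_le_mul_of_nonneg_right h2 (by positivity : (0:ℝ) ≤ ((m:ℕ):ℝ) ^ m)
  calc F ^ (2 * d) * A * ((m : ℕ) : ℝ) ^ m
      ≤ ((2 * d : ℕ) : ℝ) ^ (2 * d) * u ^ m * C * ((m:ℕ):ℝ) ^ m := h3
    _ = ((2 * d : ℕ) : ℝ) ^ (2 * d) * C * (u * m) ^ m := by rw [mul_pow]; ring
    _ = ((2 * d : ℕ) : ℝ) ^ (2 * d) * C * g ^ m := by rw [← hgu]

/-- Single non-diagonal term case: let
`f(x) = Σ_i c_i x_i^{2d} + f_0 + f_α x^α` with `0 < |α| < 2d` and `f_α x^α` not a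
square.  If `f − r ≥ 0` on `ℝ^n`, then `c_i ≥ 0` for all `i`, `f_0 ≥ r`, and
`f_α^{2d}·α^α·(2d−|α|)^{2d−|α|} ≤ (2d)^{2d}·Π_i c_i^{α_i}·(f_0−r)^{2d−|α|}`. -/
theorem single_term_psd_ineq {n d : ℕ} (hd : 1 ≤ d) (α : Fin n → ℕ)
    (hα0 : 0 < ∑ i, α i) (hα2d : ∑ i, α i < 2 * d)
    (c : Fin n → ℝ) (f0 fα : ℝ)
    (hns : fα < 0 ∨ ∃ i, Odd (α i)) (r : ℝ)
    (hpsd : ∀ x : Fin n → ℝ,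
      0 ≤ (∑ i, c i * x i ^ (2 * d) + f0 + fα * ∏ i, x i ^ α i) - r) :
    (∀ i, 0 ≤ c i) ∧ r ≤ f0 ∧
      fα ^ (2 * d) * (∏ i, (α i : ℝ) ^ (α i)) *
          ((2 * d - ∑ i, α i : ℕ) : ℝ) ^ (2 * d - ∑ i, α i)
        ≤ ((2 * d : ℕ) : ℝ) ^ (2 * d) * (∏ i, (c i) ^ (α i)) *
          (f0 - r) ^ (2 * d - ∑ i, α i) := by
  -- Step A : f0 - r ≥ 0
  have hg0 : 0 ≤ f0 - r := by
    obtain ⟨i0, hi0⟩ : ∃ i, α i ≠ 0 := by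
      by_contra h'
      push_neg at h'
      simp [h'] at hα0
    have h := hpsd 0
    simp only [Pi.zero_apply] at h
    rw [Finset.prod_eq_zero (Finset.mem_univ i0) (by
      rw [zero_pow hi0]), zero_pow (by omega : 2 * d ≠ 0)] at h
    simp at h
    linarith
  -- Step B : c i ≥ 0
  have hc : ∀ i, 0 ≤ c i := by
    intro i
    by_contra hci
    push_neg at hci
    set s : ℝ := max 1 ((|fα| + (f0 - r) + 1) / (-c i)) with hs
    have hs1 : (1:ℝ) ≤ s := le_max_left _ _
    have hs0 : (0:ℝ) < s := by linarith
    have hsc : |fα| + (f0 - r) + 1 ≤ s * (-c i) :=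
      (div_le_iff₀ (by linarith : (0:ℝ) < -c i)).mp (le_max_right _ _)
    set x : Fin n → ℝ := fun j => if j = i then s else 0 with hx
    have h := hpsd x
    have hsum : ∑ j, c j * x j ^ (2 * d) = c i * s ^ (2 * d) := by
      rw [Fintype.sum_eq_single i (fun j hj => by
        simp [hx, hj, zero_pow (by omega : 2 * d ≠ 0)])]
      simp [hx]
    have hprod : |∏ j, x j ^ α j| ≤ s ^ (2 * d - 1) := by
      calc |∏ j, x j ^ α j| = ∏ j, |x j| ^ α j := by
            rw [Finset.abs_prod]
            exact Finset.prod_congr rfl fun j _ => abs_pow _ _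
        _ ≤ ∏ j, s ^ α j := Finset.prod_le_prod (fun j _ => by positivity)
            (fun j _ => pow_le_pow_left₀ (abs_nonneg _) (by
              by_cases hj : j = i
              · simp [hx, hj, abs_of_pos hs0]
              · simp [hx, hj]; linarith) _)
        _ = s ^ (∑ j, α j) := by rw [Finset.prod_pow_eq_pow_sum]
        _ ≤ s ^ (2 * d - 1) := pow_le_pow_right₀ hs1 (by omega)
    have hf1 : fα * ∏ j, x j ^ α j ≤ |fα| * s ^ (2 * d - 1) := by
      calc fα * ∏ j, x j ^ α j ≤ |fα * ∏ j, x j ^ α j| := le_abs_self _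
        _ = |fα| * |∏ j, x j ^ α j| := abs_mul _ _
        _ ≤ |fα| * s ^ (2 * d - 1) :=
            mul_le_mul_of_nonneg_left hprod (abs_nonneg _)
    have hpow : s ^ (2 * d) = s * s ^ (2 * d - 1) := by
      rw [← pow_succ']
      congr 1
      omega
    have hstep : c i * s ^ (2 * d) ≤ -(|fα| + (f0 - r) + 1) * s ^ (2 * d - 1) := by
      rw [hpow, ← mul_assoc]
      apply mul_le_mul_of_nonneg_right _ (pow_nonneg hs0.le _)
      nlinarith [hsc]
    have hs1e : (1:ℝ) ≤ s ^ (2 * d - 1) := one_le_pow₀ hs1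
    rw [hsum] at h
    nlinarith [h, hf1, hstep, hs1e, hg0]
  -- Step C : key inequality
  have hkey : ∀ t : Fin n → ℝ, (∀ i, 0 ≤ t i) →
      |fα| * ∏ i, t i ^ α i ≤ ∑ i, c i * t i ^ (2 * d) + (f0 - r) := by
    intro t ht
    rcases le_or_gt fα 0 with hneg | hpos
    · have h := hpsd t
      rw [abs_of_nonpos hneg]
      linarith
    · obtain ⟨i0, hodd⟩ := hns.resolve_left (not_lt.mpr hpos.le)
      set x : Fin n → ℝ := fun j => if j = i0 then -t j else t j with hx
      have h := hpsd x
      have h1 : ∀ j, x j ^ (2 * d) = t j ^ (2 * d) := fun j => by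
        by_cases hj : j = i0
        · simp [hx, hj, (even_two_mul d).neg_pow]
        · simp [hx, hj]
      have h2 : ∏ j, x j ^ α j = -∏ j, t j ^ α j := by
        rw [Finset.prod_eq_mul_prod_sdiff_singleton_of_mem (Finset.mem_univ i0)
            (fun j => x j ^ α j),
          Finset.prod_eq_mul_prod_sdiff_singleton_of_mem (Finset.mem_univ i0)
            (fun j => t j ^ α j)]
        have hx0 : x i0 ^ α i0 = -(t i0 ^ α i0) := by
          rw [hx]
          simp only [if_pos rfl]
          exact hodd.neg_pow _
        have hrest : ∏ j ∈ Finset.univ \ {i0}, x j ^ α j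
            = ∏ j ∈ Finset.univ \ {i0}, t j ^ α j :=
          Finset.prod_congr rfl fun j hj => by
            rw [hx]
            simp only [if_neg (Finset.notMem_singleton.mp (Finset.mem_sdiff.mp hj).2)]
        rw [hx0, hrest]
        ring
      simp only [h1] at h
      rw [h2] at h
      rw [abs_of_pos hpos]
      linarith
  -- Conclusion
  refine ⟨hc, by linarith, ?_⟩
  have habs : fα ^ (2 * d) = |fα| ^ (2 * d) := by
    rw [pow_mul, pow_mul, sq_abs]
  rw [habs]
  have hmain : ∀ ε : ℝ, 0 < ε →
      |fα| ^ (2 * d) * (∏ i, (α i : ℝ) ^ (α i)) *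
          ((2 * d - ∑ i, α i : ℕ) : ℝ) ^ (2 * d - ∑ i, α i)
        ≤ ((2 * d : ℕ) : ℝ) ^ (2 * d) * (∏ i, (c i + ε) ^ (α i)) *
          (f0 - r + ε) ^ (2 * d - ∑ i, α i) := by
    intro ε hε
    refine aux_pos hd α hα0 hα2d (fun i => c i + ε)
      (fun i => by have := hc i; show (0:ℝ) < c i + ε; linarith) (f0 - r + ε) (by linarith)
      |fα| (abs_nonneg _) (fun t ht => ?_)
    refine (hkey t ht).trans ?_
    have : ∑ i, c i * t i ^ (2 * d) ≤ ∑ i, (c i + ε) * t i ^ (2 * d) :=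
      Finset.sum_le_sum fun i _ =>
        mul_le_mul_of_nonneg_right (by linarith) (pow_nonneg (ht i) _)
    linarith
  have hcont : ContinuousAt (fun ε : ℝ =>
      ((2 * d : ℕ) : ℝ) ^ (2 * d) * (∏ i, (c i + ε) ^ (α i)) *
        (f0 - r + ε) ^ (2 * d - ∑ i, α i)) 0 := by fun_prop
  have htend : Filter.Tendsto (fun ε : ℝ =>
      ((2 * d : ℕ) : ℝ) ^ (2 * d) * (∏ i, (c i + ε) ^ (α i)) *
        (f0 - r + ε) ^ (2 * d - ∑ i, α i)) (nhdsWithin 0 (Set.Ioi 0))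
      (nhds (((2 * d : ℕ) : ℝ) ^ (2 * d) * (∏ i, (c i) ^ (α i)) *
        (f0 - r) ^ (2 * d - ∑ i, α i))) := by
    have := hcont.tendsto.mono_left (nhdsWithin_le_nhds (s := Set.Ioi (0:ℝ)))
    simpa using this
  exact ge_of_tendsto htend
    (eventually_mem_nhdsWithin.mono fun ε hε => hmain ε hε)
end

section
/- For f(X,Y) = X^4 + Y^4 − X^2Y^2 + X + Y, the global minimum of f on ℝ^2 equals −3/2^{4/3}, and f − (−3/2^{4/3}) is a sum of squares; in particular f_* = f_sos = −3·2^{−4/3}. -/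
open MvPolynomial

lemma eval_nonneg_of_isSumSq {p : MvPolynomial (Fin 2) ℝ} (h : IsSumSq p)
    (x : Fin 2 → ℝ) : 0 ≤ eval x p := by
  induction h with
  | zero => simp
  | sq_add a _ ih =>
      simp only [map_add, map_mul]
      nlinarith [mul_self_nonneg (eval x a)]

/-- For `f(X,Y) = X^4 + Y^4 − X^2Y^2 + X + Y`, the global minimum of `f` on `ℝ²`
equals `−3/2^{4/3}` (it is a lower bound and is attained), and
`f − (−3/2^{4/3})` is a sum of squares; in particular `f_* = f_sos = −3·2^{−4/3}`. -/
theorem example_min_and_sos :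
    (∀ x : Fin 2 → ℝ,
      -(3 / (2 : ℝ) ^ ((4 : ℝ) / 3)) ≤
        eval x (X 0 ^ 4 + X 1 ^ 4 - X 0 ^ 2 * X 1 ^ 2 + X 0 + X 1 :
          MvPolynomial (Fin 2) ℝ))
    ∧ (∃ x : Fin 2 → ℝ,
      eval x (X 0 ^ 4 + X 1 ^ 4 - X 0 ^ 2 * X 1 ^ 2 + X 0 + X 1 :
          MvPolynomial (Fin 2) ℝ) = -(3 / (2 : ℝ) ^ ((4 : ℝ) / 3)))
    ∧ IsSumSq ((X 0 ^ 4 + X 1 ^ 4 - X 0 ^ 2 * X 1 ^ 2 + X 0 + X 1 :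
          MvPolynomial (Fin 2) ℝ) - C (-(3 / (2 : ℝ) ^ ((4 : ℝ) / 3)))) := by
  set s : ℝ := (2 : ℝ) ^ ((1 : ℝ) / 3) with hs_def
  have hs0 : (0 : ℝ) < s := Real.rpow_pos_of_pos (by norm_num) _
  have hs : s ^ 3 = 2 := by
    rw [hs_def, ← Real.rpow_natCast ((2 : ℝ) ^ ((1 : ℝ) / 3)) 3,
      ← Real.rpow_mul (by norm_num)]
    norm_num
  have h43 : (2 : ℝ) ^ ((4 : ℝ) / 3) = s ^ 4 := by
    rw [hs_def, ← Real.rpow_natCast ((2 : ℝ) ^ ((1 : ℝ) / 3)) 4,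
      ← Real.rpow_mul (by norm_num)]
    norm_num
  have hK2 : (3 : ℝ) / (2 : ℝ) ^ ((4 : ℝ) / 3) = 3 * s ^ 2 / 4 := by
    rw [h43]
    rw [div_eq_div_iff (by positivity) (by norm_num)]
    nlinarith [hs]
  set a : ℝ := Real.sqrt 3 / 2 with ha_def
  have ha : a ^ 2 = 3 / 4 := by
    rw [ha_def, div_pow, Real.sq_sqrt (by norm_num : (0:ℝ) ≤ 3)]; norm_num
  set b : ℝ := Real.sqrt 2 / 4 with hb_def
  have hb : b ^ 2 = 1 / 8 := by
    rw [hb_def, div_pow, Real.sq_sqrt (by norm_num : (0:ℝ) ≤ 2)]; norm_num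
  set e : ℝ := Real.sqrt s / 2 with he_def
  have he : e ^ 2 = s / 4 := by
    rw [he_def, div_pow, Real.sq_sqrt hs0.le]; norm_num
  set q1 : MvPolynomial (Fin 2) ℝ := C a * (X 0 ^ 2 - X 1 ^ 2) with hq1
  set q2 : MvPolynomial (Fin 2) ℝ := C b * (2 * (X 0 * X 1) - C s) with hq2
  set q3 : MvPolynomial (Fin 2) ℝ := C (1/4 : ℝ) * (2 * X 0 ^ 2 - C s) with hq3
  set q4 : MvPolynomial (Fin 2) ℝ := C (1/4 : ℝ) * (2 * X 1 ^ 2 - C s) with hq4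
  set q5 : MvPolynomial (Fin 2) ℝ := C e * (X 0 + X 1 + C s * C s) with hq5
  have key : (X 0 ^ 4 + X 1 ^ 4 - X 0 ^ 2 * X 1 ^ 2 + X 0 + X 1 :
        MvPolynomial (Fin 2) ℝ) - C (-(3 / (2 : ℝ) ^ ((4 : ℝ) / 3)))
      = q1 * q1 + (q2 * q2 + (q3 * q3 + (q4 * q4 + (q5 * q5 + 0)))) := by
    apply MvPolynomial.funext
    intro x
    simp only [hq1, hq2, hq3, hq4, hq5, map_add, map_sub, map_mul, map_pow,
      map_ofNat, map_zero, eval_X, eval_C, map_neg]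
    linear_combination hK2 - (x 0 ^ 2 - x 1 ^ 2) ^ 2 * ha
      - (2 * (x 0 * x 1) - s) ^ 2 * hb - (x 0 + x 1 + s ^ 2) ^ 2 * he
      - ((x 0 + x 1) / 2 + s ^ 2 / 4) * hs
  have sos : IsSumSq ((X 0 ^ 4 + X 1 ^ 4 - X 0 ^ 2 * X 1 ^ 2 + X 0 + X 1 :
        MvPolynomial (Fin 2) ℝ) - C (-(3 / (2 : ℝ) ^ ((4 : ℝ) / 3)))) := by
    rw [key]
    exact .sq_add _ (.sq_add _ (.sq_add _ (.sq_add _ (.sq_add _ .zero))))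
  refine ⟨?_, ?_, sos⟩
  · intro x
    have h0 := eval_nonneg_of_isSumSq sos x
    rw [map_sub, eval_C] at h0
    linarith
  · refine ⟨fun _ => -(s ^ 2 / 2), ?_⟩
    simp only [map_add, map_sub, map_mul, map_pow, eval_X]
    rw [show (3 : ℝ) / (2 : ℝ) ^ ((4 : ℝ) / 3) = 3 * s ^ 2 / 4 from hK2]
    linear_combination (s ^ 2 / 16) * (s ^ 3 + 2) * hs
end

section
/- For every real number t ≥ 0 and every integer d ≥ 1, the two-variable form α_1 X^{2d} + α_2 Y^{2d} − 2d·X^{α_1}Y^{α_2}, with α_1 + α_2 = 2d and α_1, α_2 ∈ ℕ, is a sum of squares of binomials (polynomials of the form aX^βY^γ − bX^{β'}Y^{γ'}). -/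
open MvPolynomial

/-- The set of squares of binomials in `ℝ[X,Y]`. -/
def binomSq2 : Set (MvPolynomial (Fin 2) ℝ) :=
  {q | ∃ (a b : ℝ) (β γ : Fin 2 →₀ ℕ),
    q = (monomial β a - monomial γ b) ^ 2}

/-- `p` is a sum of binomial squares. -/
def IsSOBS2 (p : MvPolynomial (Fin 2) ℝ) : Prop :=
  p ∈ AddSubmonoid.closure binomSq2

/-- A scaled binomial square written in `C`/`X` form is a binomial square. -/
lemma memBS (u v : ℝ) (p q p' q' : ℕ) :
    (C u * (X 0 ^ p * X 1 ^ q) - C v * (X 0 ^ p' * X 1 ^ q')) ^ 2 ∈ binomSq2 := by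
  refine ⟨u, v, Finsupp.single 0 p + Finsupp.single 1 q,
    Finsupp.single 0 p' + Finsupp.single 1 q', ?_⟩
  rw [monomial_add_single, monomial_add_single, ← C_mul_X_pow_eq_monomial,
    ← C_mul_X_pow_eq_monomial]
  ring

lemma sobs_sq (u v : ℝ) (p q p' q' : ℕ) :
    IsSOBS2 ((C u * (X 0 ^ p * X 1 ^ q) - C v * (X 0 ^ p' * X 1 ^ q')) ^ 2) :=
  AddSubmonoid.subset_closure (memBS u v p q p' q')

lemma sobs_sq1 (p q p' q' : ℕ) :
    IsSOBS2 ((X (0 : Fin 2) ^ p * X 1 ^ q - X 0 ^ p' * X 1 ^ q') ^ 2) := by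
  simpa using sobs_sq 1 1 p q p' q'

/-- SOBS is stable under multiplication by `X i ^ 2`. -/
lemma sobs_mul_X_sq (i : Fin 2) {p : MvPolynomial (Fin 2) ℝ} (hp : IsSOBS2 p) :
    IsSOBS2 (X i ^ 2 * p) := by
  induction hp using AddSubmonoid.closure_induction with
  | mem q hq =>
    obtain ⟨a, b, β, γ, rfl⟩ := hq
    apply AddSubmonoid.subset_closure
    refine ⟨a, b, β + Finsupp.single i 1, γ + Finsupp.single i 1, ?_⟩
    rw [show (X i)^2 * (monomial β a - monomial γ b)^2
        = (X i * (monomial β a - monomial γ b))^2 by ring]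
    rw [mul_sub]
    rw [X, monomial_mul, monomial_mul, one_mul, one_mul, add_comm β, add_comm γ]
  | zero => have h0 : IsSOBS2 0 := zero_mem _; simpa using h0
  | add x y _ _ hx hy => rw [mul_add]; exact add_mem hx hy

/-- `(X² - Y²)(X^{2c} - Y^{2c})` is a sum of binomial squares. -/
lemma sobs_D (c : ℕ) :
    IsSOBS2 ((X 0 ^ 2 - X 1 ^ 2) * (X 0 ^ (2 * c) - X (1 : Fin 2) ^ (2 * c))) := by
  induction c with
  | zero => have h0 : IsSOBS2 0 := zero_mem _; simpa using h0
  | succ c ih =>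
    have h : ((X 0 ^ 2 - X 1 ^ 2 : MvPolynomial (Fin 2) ℝ)) * (X 0 ^ (2 * (c + 1)) - X 1 ^ (2 * (c + 1)))
        = X 0 ^ 2 * ((X 0 ^ 2 - X 1 ^ 2) * (X 0 ^ (2 * c) - X 1 ^ (2 * c)))
          + (X (0 : Fin 2) ^ 2 * X 1 ^ c - X 0 ^ 0 * X 1 ^ (c + 2)) ^ 2 := by
      ring
    rw [h]
    exact add_mem (sobs_mul_X_sq 0 ih) (sobs_sq1 2 c 0 (c + 2))

/-- The remainder `R a b` is a sum of binomial squares. -/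
lemma sobs_R (a b : ℕ) :
    IsSOBS2 (X 0 ^ (2 * (a + b) + 2) + C (b : ℝ) * X 1 ^ (2 * (a + b) + 2)
      - C (b : ℝ) * X 0 ^ 2 * X 1 ^ (2 * (a + b)) - X 0 ^ (2 * a + 2) * X 1 ^ (2 * b)) := by
  induction b with
  | zero =>
    have h : (X (0 : Fin 2) ^ (2 * (a + 0) + 2) + C ((0 : ℕ) : ℝ) * X 1 ^ (2 * (a + 0) + 2)
        - C ((0 : ℕ) : ℝ) * X 0 ^ 2 * X 1 ^ (2 * (a + 0))
        - X 0 ^ (2 * a + 2) * X 1 ^ (2 * 0)) = 0 := by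
      simp only [Nat.cast_add, Nat.cast_mul, Nat.cast_ofNat, Nat.cast_one, Nat.cast_zero,
        map_add, map_mul, map_one, map_zero, map_ofNat]; ring
    rw [h]; exact zero_mem _
  | succ b ih =>
    have h : (X (0 : Fin 2) ^ (2 * (a + (b + 1)) + 2)
        + C (((b + 1) : ℕ) : ℝ) * X 1 ^ (2 * (a + (b + 1)) + 2)
        - C (((b + 1) : ℕ) : ℝ) * X 0 ^ 2 * X 1 ^ (2 * (a + (b + 1)))
        - X 0 ^ (2 * a + 2) * X 1 ^ (2 * (b + 1)))
        = X 1 ^ 2 * (X 0 ^ (2 * (a + b) + 2) + C (b : ℝ) * X 1 ^ (2 * (a + b) + 2)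
            - C (b : ℝ) * X 0 ^ 2 * X 1 ^ (2 * (a + b)) - X 0 ^ (2 * a + 2) * X 1 ^ (2 * b))
          + (X 0 ^ 2 - X 1 ^ 2) * (X 0 ^ (2 * (a + b + 1)) - X 1 ^ (2 * (a + b + 1))) := by
      simp only [Nat.cast_add, Nat.cast_mul, Nat.cast_ofNat, Nat.cast_one, Nat.cast_zero,
        map_add, map_mul, map_one, map_zero, map_ofNat]
      ring
    rw [h]
    exact add_mem (sobs_mul_X_sq 1 ih) (sobs_D (a + b + 1))

/-- Main lemma: `a·X^{2(a+b)} + b·Y^{2(a+b)} - (a+b)·X^{2a}Y^{2b}` is SOBS. -/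
lemma sobs_H (a b : ℕ) :
    IsSOBS2 (C (a : ℝ) * X 0 ^ (2 * (a + b)) + C (b : ℝ) * X 1 ^ (2 * (a + b))
      - C (((a + b) : ℕ) : ℝ) * (X 0 ^ (2 * a) * X 1 ^ (2 * b))) := by
  induction a with
  | zero =>
    have h : (C ((0 : ℕ) : ℝ) * X (0 : Fin 2) ^ (2 * (0 + b)) + C (b : ℝ) * X 1 ^ (2 * (0 + b))
        - C (((0 + b) : ℕ) : ℝ) * (X 0 ^ (2 * 0) * X 1 ^ (2 * b))) = 0 := by
      simp only [Nat.cast_add, Nat.cast_mul, Nat.cast_ofNat, Nat.cast_one, Nat.cast_zero,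
        map_add, map_mul, map_one, map_zero, map_ofNat]; ring
    rw [h]; exact zero_mem _
  | succ a ih =>
    have h : (C (((a + 1) : ℕ) : ℝ) * X (0 : Fin 2) ^ (2 * ((a + 1) + b))
        + C (b : ℝ) * X 1 ^ (2 * ((a + 1) + b))
        - C ((((a + 1) + b) : ℕ) : ℝ) * (X 0 ^ (2 * (a + 1)) * X 1 ^ (2 * b)))
        = X 0 ^ 2 * (C (a : ℝ) * X 0 ^ (2 * (a + b)) + C (b : ℝ) * X 1 ^ (2 * (a + b))
            - C (((a + b) : ℕ) : ℝ) * (X 0 ^ (2 * a) * X 1 ^ (2 * b)))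
          + (X 0 ^ (2 * (a + b) + 2) + C (b : ℝ) * X 1 ^ (2 * (a + b) + 2)
            - C (b : ℝ) * X 0 ^ 2 * X 1 ^ (2 * (a + b)) - X 0 ^ (2 * a + 2) * X 1 ^ (2 * b)) := by
      simp only [Nat.cast_add, Nat.cast_mul, Nat.cast_ofNat, Nat.cast_one, Nat.cast_zero,
        map_add, map_mul, map_one, map_zero, map_ofNat]
      ring
    rw [h]
    exact add_mem (sobs_mul_X_sq 0 ih) (sobs_R a b)

/-- Two-variable base case of the Hurwitz–Reznick theorem: for `d ≥ 1` and
`α₁ + α₂ = 2d`, the form `α₁X^{2d} + α₂Y^{2d} − 2d·X^{α₁}Y^{α₂}` is a sum of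
binomial squares. -/
theorem hurwitz_reznick_two_vars {d : ℕ} (hd : 1 ≤ d) (α₁ α₂ : ℕ)
    (hα : α₁ + α₂ = 2 * d) :
    IsSOBS2 (C ((α₁ : ℕ) : ℝ) * X 0 ^ (2 * d) + C ((α₂ : ℕ) : ℝ) * X 1 ^ (2 * d)
      - C ((2 * d : ℕ) : ℝ) * (X 0 ^ α₁ * X 1 ^ α₂)) := by
  rcases Nat.even_or_odd α₁ with ⟨a, ha⟩ | ⟨a, ha⟩
  · -- α₁ = 2a, α₂ = 2b with a + b = d
    obtain ⟨b, hb, hab⟩ : ∃ b, α₂ = 2 * b ∧ a + b = d := ⟨d - a, by omega, by omega⟩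
    subst hb
    have key : (C ((α₁ : ℕ) : ℝ) * X (0 : Fin 2) ^ (2 * d) + C (((2 * b : ℕ)) : ℝ) * X 1 ^ (2 * d)
        - C ((2 * d : ℕ) : ℝ) * (X 0 ^ α₁ * X 1 ^ (2 * b)))
        = (C (a : ℝ) * X 0 ^ (2 * (a + b)) + C (b : ℝ) * X 1 ^ (2 * (a + b))
            - C (((a + b) : ℕ) : ℝ) * (X 0 ^ (2 * a) * X 1 ^ (2 * b)))
          + (C (a : ℝ) * X 0 ^ (2 * (a + b)) + C (b : ℝ) * X 1 ^ (2 * (a + b))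
            - C (((a + b) : ℕ) : ℝ) * (X 0 ^ (2 * a) * X 1 ^ (2 * b))) := by
      subst hab
      rw [show α₁ = a + a by omega]
      simp only [Nat.cast_add, Nat.cast_mul, Nat.cast_ofNat, Nat.cast_one, Nat.cast_zero,
        map_add, map_mul, map_one, map_zero, map_ofNat]
      ring
    rw [key]
    exact add_mem (sobs_H a b) (sobs_H a b)
  · -- α₁ = 2a + 1, α₂ = 2b + 1 with a + b + 1 = d
    obtain ⟨b, hb, hab⟩ : ∃ b, α₂ = 2 * b + 1 ∧ a + b + 1 = d := ⟨(α₂ - 1) / 2, by omega, by omega⟩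
    subst hb
    have hs : (Real.sqrt ((d : ℕ) : ℝ)) ^ 2 = ((d : ℕ) : ℝ) :=
      Real.sq_sqrt (by positivity)
    have key : (C ((α₁ : ℕ) : ℝ) * X (0 : Fin 2) ^ (2 * d)
        + C (((2 * b + 1 : ℕ)) : ℝ) * X 1 ^ (2 * d)
        - C ((2 * d : ℕ) : ℝ) * (X 0 ^ α₁ * X 1 ^ (2 * b + 1)))
        = (C (Real.sqrt ((d : ℕ) : ℝ)) * (X 0 ^ (a + 1) * X 1 ^ b)
            - C (Real.sqrt ((d : ℕ) : ℝ)) * (X 0 ^ a * X 1 ^ (b + 1))) ^ 2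
          + ((C (((a + 1 : ℕ)) : ℝ) * X 0 ^ (2 * ((a + 1) + b))
              + C (b : ℝ) * X 1 ^ (2 * ((a + 1) + b))
              - C ((((a + 1) + b) : ℕ) : ℝ) * (X 0 ^ (2 * (a + 1)) * X 1 ^ (2 * b)))
            + (C (a : ℝ) * X 0 ^ (2 * (a + (b + 1))) + C (((b + 1 : ℕ)) : ℝ) * X 1 ^ (2 * (a + (b + 1)))
              - C (((a + (b + 1)) : ℕ) : ℝ) * (X 0 ^ (2 * a) * X 1 ^ (2 * (b + 1))))) := by
      have expand : (C (Real.sqrt ((d : ℕ) : ℝ)) * (X (0 : Fin 2) ^ (a + 1) * X 1 ^ b)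
          - C (Real.sqrt ((d : ℕ) : ℝ)) * (X 0 ^ a * X 1 ^ (b + 1))) ^ 2
          = C (((d : ℕ) : ℝ)) * (X 0 ^ (a + 1) * X 1 ^ b - X 0 ^ a * X 1 ^ (b + 1)) ^ 2 := by
        rw [show (C (Real.sqrt ((d : ℕ) : ℝ)) * (X (0 : Fin 2) ^ (a + 1) * X 1 ^ b)
          - C (Real.sqrt ((d : ℕ) : ℝ)) * (X 0 ^ a * X 1 ^ (b + 1))) ^ 2
          = C (Real.sqrt ((d : ℕ) : ℝ)) ^ 2 * (X 0 ^ (a + 1) * X 1 ^ b - X 0 ^ a * X 1 ^ (b + 1)) ^ 2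
          by ring, ← C_pow, hs]
      rw [expand]
      subst hab
      rw [show α₁ = 2 * a + 1 from ha]
      simp only [Nat.cast_add, Nat.cast_mul, Nat.cast_ofNat, Nat.cast_one, Nat.cast_zero,
        map_add, map_mul, map_one, map_zero, map_ofNat]
      ring
    rw [key]
    exact add_mem (sobs_sq _ _ _ _ _ _) (add_mem (sobs_H (a + 1) b) (sobs_H a (b + 1)))
end

section
/- Let d ≥ 1, α ∈ ℕ^n with |α| = 2d, and suppose there exist distinct indices i_1 ≠ i_2 with α_{i_1} ≤ d and α_{i_2} ≤ d. Write α = β + γ with β, γ ∈ ℕ^n, β_{i_1} = 0, γ_{i_2} = 0, |β| = |γ| = d. Then Σ_i α_i X_i^{2d} − 2d·X^α = (1/2)(Σ_i 2β_i X_i^{2d} − 2d·X^{2β}) + (1/2)(Σ_i 2γ_i X_i^{2d} − 2d·X^{2γ}) + d·(X^β − X^γ)^2. -/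
open MvPolynomial

/-- The polynomial identity used in the inductive step of the proof of the
Hurwitz–Reznick theorem: if `α = β + γ` with `β_{i₁} = 0`, `γ_{i₂} = 0`,
`|β| = |γ| = d`, `|α| = 2d`, `α_{i₁} ≤ d`, `α_{i₂} ≤ d`, `i₁ ≠ i₂`, then
`Σ α_i X_i^{2d} − 2d·X^α = ½(Σ 2β_i X_i^{2d} − 2d·X^{2β})
  + ½(Σ 2γ_i X_i^{2d} − 2d·X^{2γ}) + d·(X^β − X^γ)²`. -/
theorem hurwitz_reznick_step {n d : ℕ} (hd : 1 ≤ d) (i₁ i₂ : Fin n)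
    (hne : i₁ ≠ i₂) (α β γ : Fin n →₀ ℕ)
    (hα : ∑ i, α i = 2 * d) (h1 : α i₁ ≤ d) (h2 : α i₂ ≤ d)
    (hsplit : α = β + γ) (hβ : β i₁ = 0) (hγ : γ i₂ = 0)
    (hβd : ∑ i, β i = d) (hγd : ∑ i, γ i = d) :
    (∑ i, C ((α i : ℕ) : ℝ) * X i ^ (2 * d)) - C ((2 * d : ℕ) : ℝ) * monomial α 1
      = C (1 / 2) * ((∑ i, C ((2 * β i : ℕ) : ℝ) * X i ^ (2 * d))
            - C ((2 * d : ℕ) : ℝ) * monomial (2 • β) 1)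
        + C (1 / 2) * ((∑ i, C ((2 * γ i : ℕ) : ℝ) * X i ^ (2 * d))
            - C ((2 * d : ℕ) : ℝ) * monomial (2 • γ) 1)
        + C ((d : ℕ) : ℝ) * (monomial β 1 - monomial γ 1) ^ 2 := by
  subst hsplit
  have hb : monomial (2 • β) (1 : ℝ) = monomial β 1 * monomial β 1 := by
    rw [monomial_mul, one_mul, two_smul]
  have hg : monomial (2 • γ) (1 : ℝ) = monomial γ 1 * monomial γ 1 := by
    rw [monomial_mul, one_mul, two_smul]
  have ha : monomial (β + γ) (1 : ℝ) = monomial β 1 * monomial γ 1 := by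
    rw [monomial_mul, one_mul]
  simp only [hb, hg, ha, Finsupp.add_apply, Nat.cast_add, Nat.cast_mul, Nat.cast_ofNat,
    map_add, map_mul, map_ofNat, map_one, C_1]
  have h2 : C (1/2 : ℝ) * 2 = (1 : MvPolynomial (Fin n) ℝ) := by
    rw [show (2:MvPolynomial (Fin n) ℝ) = C 2 from (map_ofNat _ _).symm, ← C_mul]
    norm_num
  rw [two_mul d]
  simp only [two_mul, add_mul, Finset.sum_add_distrib]
  linear_combination (∑ x, C ((β x : ℝ)) * X x ^ (d+d) - C (d:ℝ) * (monomial β 1 * monomial β 1)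
    + ∑ x, C ((γ x : ℝ)) * X x ^ (d+d) - C (d:ℝ) * (monomial γ 1 * monomial γ 1)) * (-h2)
end
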